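/- Let G be the full isoradial graph with angle bounds 0 < k ≤ θ_e ≤ K < π and maximal degree Δ < ∞, and let T be the critical Kac-Ward operator on ℓ². For a finite subgraph H, let φ_H = S 1_H where 1_H is the indicator of H. Then ‖Tφ_H‖ ≤ C·√(|H₀|/|H|)·‖φ_H‖, where H₀ is the set of undirected edges pointing at non-interior vertices of H or of G∖H, and C = tan(K/2)·Δ/sin(k/2). Consequently, if G admits finite subgraphs with |H₀|/|H| → 0, then T has no bounded inverse on ℓ². -/

import Mathlib

open Complex

noncomputable section

attribute [local instance] Classical.propDecidable

/-- Reversal of a directed edge. -/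
def rev (e : ℂ × ℂ) : ℂ × ℂ := (e.2, e.1)

/-- The undirected edge underlying a directed edge. -/
def ue (e : ℂ × ℂ) : Sym2 ℂ := s(e.1, e.2)

/-- The turning angle `∠(e, g) ∈ (-π, π]`. -/
def ang (e g : ℂ × ℂ) : ℝ := Complex.arg ((g.2 - g.1) / (e.2 - e.1))

/-- The counterclockwise angle from `e` to `g`, in `(0, 2π]`. -/
def ccw (e g : ℂ × ℂ) : ℝ := if 0 < ang e g then ang e g else ang e g + 2 * Real.pi

/-- `e₁` and `e₂` are consecutive (in counterclockwise order) directed edges of `D`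
pointing at the vertex `z`: no other edge of `D` pointing at `z` lies strictly between
them counterclockwise. -/
def ConsecIn (D : Set (ℂ × ℂ)) (z : ℂ) (e₁ e₂ : ℂ × ℂ) : Prop :=
  e₁ ∈ D ∧ e₂ ∈ D ∧ e₁.2 = z ∧ e₂.2 = z ∧ e₁ ≠ e₂ ∧
  ∀ g ∈ D, g.2 = z → g ≠ e₁ → g ≠ e₂ → ccw (rev e₁) (rev e₂) ≤ ccw (rev e₁) (rev g)

/-- An isoradial graph, presented by its symmetric set of directed edges together with
the rhombus half-angles `θ_e ∈ (0, π)` of its edges.  The fields `angleSum`,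
`consecAngle` and `angAdd` record the basic geometric properties of a rhombic (isoradial)
embedding: the angles `θ` sum to `π` around every vertex, the turning angle between
consecutive incoming edges at a vertex is `θ_{e₁} + θ_{e₂}`, and turning angles at a
vertex are additive. -/
structure Isoradial where
  D : Set (ℂ × ℂ)
  θ : Sym2 ℂ → ℝ
  nd : ∀ e ∈ D, e.1 ≠ e.2
  symm : ∀ e ∈ D, rev e ∈ D
  finOut : ∀ z : ℂ, {g ∈ D | g.1 = z}.Finite
  θpos : ∀ e ∈ D, 0 < θ (ue e)
  θlt : ∀ e ∈ D, θ (ue e) < Real.pi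
  angleSum : ∀ z : ℂ, {g ∈ D | g.1 = z}.Nonempty →
    ∑ g ∈ (finOut z).toFinset, θ (ue g) = Real.pi
  consecAngle : ∀ z e₁ e₂, ConsecIn D z e₁ e₂ → ang e₁ e₂ = θ (ue e₁) + θ (ue e₂)
  angAdd : ∀ z e₁ e₂ g, ConsecIn D z e₁ e₂ → g ∈ D → g.1 = z →
    g ≠ rev e₁ → g ≠ rev e₂ → ang e₁ e₂ + ang e₂ g = ang e₁ g

/-- The Kac-Ward operator `T = Id - Λ` acting on functions of directed edges (the
transition sum is taken at directed edges of the graph, and `T` acts as the identity on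
the orthogonal complement, i.e. away from the graph). -/
def KWop (Γ : Isoradial) (x : Sym2 ℂ → ℝ) (φ : (ℂ × ℂ) → ℂ) (e : ℂ × ℂ) : ℂ :=
  φ e - if e ∈ Γ.D then
    ∑ g ∈ (Γ.finOut e.2).toFinset,
      if g ≠ rev e then (x (ue e) : ℂ) * Complex.exp (Complex.I * (ang e g : ℂ) / 2) * φ g
      else 0
  else 0

/-- The critical weight system `x_e = tan(θ_e/2)`. -/
def critX (Γ : Isoradial) : Sym2 ℂ → ℝ := fun t => Real.tan (Γ.θ t / 2)

/-- The unit complex number `exp(-i ∠(e)/2)` spanning the line `ℓ_e`. -/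
def dirL (e : ℂ × ℂ) : ℂ := Complex.exp (-Complex.I * (Complex.arg (e.2 - e.1) : ℂ) / 2)

/-- The line `ℓ_e = exp(-i ∠(e)/2) ℝ ⊆ ℂ`. -/
def lineOf (e : ℂ × ℂ) : Set ℂ := {c : ℂ | ∃ r : ℝ, c = dirL e * (r : ℂ)}

/-- Orthogonal projection of `w` onto the line `u·ℝ`. -/
def projL (u w : ℂ) : ℂ := (((w * (starRingEnd ℂ u)).re / Complex.normSq u : ℝ) : ℂ) * u

/-- The operator `S`: `(Sf)(e) = sin(θ_e/2)·Proj(f(e); ℓ_e)`,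
mapping functions of undirected edges to elements of `L = ∏_e ℓ_e`. -/
def Sproj (Γ : Isoradial) (f : Sym2 ℂ → ℂ) (e : ℂ × ℂ) : ℂ :=
  ((Real.sin (Γ.θ (ue e) / 2) : ℝ) : ℂ) * projL (dirL e) (f (ue e))

/-- A unit vector spanning the line `(z - z*)^{-1/2} ℝ = exp(-iθ_{e₁}/2) ℓ_{e₁}` of the
face shared by a pair of consecutive incoming edges `e₁, e₂` at `z` (here `z*` is the
circumcenter of that face). -/
def faceDir (Γ : Isoradial) (e₁ : ℂ × ℂ) : ℂ :=
  Complex.exp (-Complex.I * (Γ.θ (ue e₁) : ℂ) / 2) * dirL e₁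

/-- `f` is s-holomorphic at `z`: for every face incident to `z` (equivalently, every pair
of consecutive incoming edges `e₁, e₂` at `z`), the projections of `f(e₁)` and `f(e₂)`
onto the line `(z - z*)^{-1/2} ℝ` of the face coincide. -/
def SHolAt (Γ : Isoradial) (f : Sym2 ℂ → ℂ) (z : ℂ) : Prop :=
  ∀ e₁ e₂ : ℂ × ℂ, ConsecIn Γ.D z e₁ e₂ →
    projL (faceDir Γ e₁) (f (ue e₁)) = projL (faceDir Γ e₁) (f (ue e₂))

/-- The squared `ℓ²(directed edges)` norm of a function on directed edges. -/
def l2sq (Γ : Isoradial) (φ : (ℂ × ℂ) → ℂ) : ℝ := ∑' e : Γ.D, Complex.normSq (φ e.1)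

/-- `z` is a non-interior (boundary) vertex for the finite edge set `H`: some edge of the
graph pointing at `z` lies in `H` and some does not. -/
def BdryVtx (Γ : Isoradial) (H : Finset (Sym2 ℂ)) (z : ℂ) : Prop :=
  (∃ e ∈ Γ.D, e.2 = z ∧ ue e ∈ H) ∧ (∃ e ∈ Γ.D, e.2 = z ∧ ue e ∉ H)

/-- `H₀`: the set of undirected edges of the graph pointing at a non-interior vertex of
`H` or of its complement. -/
def bdryEdges (Γ : Isoradial) (H : Finset (Sym2 ℂ)) : Set (Sym2 ℂ) :=
  {t : Sym2 ℂ | ∃ e ∈ Γ.D, ue e = t ∧ (BdryVtx Γ H e.1 ∨ BdryVtx Γ H e.2)}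

/-- The indicator function of a finite set of undirected edges. -/
def indH (H : Finset (Sym2 ℂ)) : Sym2 ℂ → ℂ := fun t => if t ∈ H then 1 else 0

/-- The complex modulus as an absolute value. -/
def Complex.abs : AbsoluteValue ℂ ℝ where
  toFun z := ‖z‖
  map_mul' := norm_mul
  nonneg' := norm_nonneg
  eq_zero' _ := norm_eq_zero
  add_le' := norm_add_le

theorem Complex.abs_apply' (z : ℂ) : Complex.abs z = ‖z‖ := rfl

theorem Complex.abs_mul_exp_arg_mul_I (x : ℂ) :
    ↑(Complex.abs x) * Complex.exp (Complex.arg x * Complex.I) = x :=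
  Complex.norm_mul_exp_arg_mul_I x

theorem Complex.abs_exp (z : ℂ) : Complex.abs (Complex.exp z) = Real.exp z.re :=
  Complex.norm_exp z

theorem Complex.abs_ofReal (r : ℝ) : Complex.abs (r : ℂ) = |r| :=
  Complex.norm_real r

theorem Complex.normSq_eq_abs (z : ℂ) : Complex.normSq z = Complex.abs z ^ 2 :=
  Complex.normSq_eq_norm_sq z

-- S0: generic geometry lemmas
namespace KW

def uv (x : ℂ × ℂ) : ℂ := (x.2 - x.1) / Complex.abs (x.2 - x.1)

lemma uv_ne_zero {x : ℂ × ℂ} (h : x.2 - x.1 ≠ 0) : uv x ≠ 0 := by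
  apply div_ne_zero h
  simp only [ne_eq, ofReal_eq_zero, map_eq_zero]
  exact h

lemma uv_rev (x : ℂ × ℂ) : uv (rev x) = - uv x := by
  simp only [uv, rev]
  rw [show x.1 - x.2 = -(x.2 - x.1) by ring, map_neg_eq_map, neg_div]

lemma rev_rev (x : ℂ × ℂ) : rev (rev x) = x := rfl

lemma rev_inj : Function.Injective rev := fun a b h => by
  simpa [rev_rev] using congrArg rev h

lemma ue_rev (x : ℂ × ℂ) : ue (rev x) = ue x := by
  simp [ue, rev, Sym2.eq_swap]

lemma ang_rev_rev (x y : ℂ × ℂ) : ang (rev x) (rev y) = ang x y := by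
  simp only [ang, rev]
  rw [show x.1 - x.2 = -(x.2 - x.1) by ring, show y.1 - y.2 = -(y.2 - y.1) by ring,
    neg_div_neg_eq]

lemma ccw_rev_rev (x y : ℂ × ℂ) : ccw (rev x) (rev y) = ccw x y := by
  simp [ccw, ang_rev_rev]

lemma ang_self {x : ℂ × ℂ} (h : x.2 - x.1 ≠ 0) : ang x x = 0 := by
  simp [ang, div_self h]

lemma neg_pi_lt_ang (x y : ℂ × ℂ) : -Real.pi < ang x y := Complex.neg_pi_lt_arg _

lemma ang_le_pi (x y : ℂ × ℂ) : ang x y ≤ Real.pi := Complex.arg_le_pi _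

lemma exp_ang {x y : ℂ × ℂ} (hx : x.2 - x.1 ≠ 0) (hy : y.2 - y.1 ≠ 0) :
    Complex.exp ((ang x y : ℂ) * Complex.I) = uv y / uv x := by
  have hq : (y.2 - y.1) / (x.2 - x.1) ≠ 0 := div_ne_zero hy hx
  have h := Complex.abs_mul_exp_arg_mul_I ((y.2 - y.1) / (x.2 - x.1))
  have habs : (Complex.abs ((y.2 - y.1) / (x.2 - x.1)) : ℂ) ≠ 0 := by
    simp only [ne_eq, ofReal_eq_zero, map_eq_zero]
    exact hq
  have hax : (Complex.abs (x.2 - x.1) : ℂ) ≠ 0 := by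
    simp only [ne_eq, ofReal_eq_zero, map_eq_zero]; exact hx
  have hay : (Complex.abs (y.2 - y.1) : ℂ) ≠ 0 := by
    simp only [ne_eq, ofReal_eq_zero, map_eq_zero]; exact hy
  have : Complex.exp ((ang x y : ℂ) * Complex.I)
      = ((y.2 - y.1) / (x.2 - x.1)) / (Complex.abs ((y.2 - y.1) / (x.2 - x.1)) : ℂ) := by
    rw [eq_div_iff habs, mul_comm]; exact h
  rw [this, uv, uv, map_div₀]
  push_cast
  field_simp

lemma ang_angle_add {x y z : ℂ × ℂ} (hx : x.2 - x.1 ≠ 0) (hy : y.2 - y.1 ≠ 0)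
    (hz : z.2 - z.1 ≠ 0) :
    (ang x y : Real.Angle) + (ang y z : Real.Angle) = (ang x z : Real.Angle) := by
  unfold ang
  rw [Complex.arg_div_coe_angle hy hx, Complex.arg_div_coe_angle hz hy,
    Complex.arg_div_coe_angle hz hx]
  abel

lemma ccw_pos (x y : ℂ × ℂ) : 0 < ccw x y := by
  unfold ccw; split
  · assumption
  · have h1 := neg_pi_lt_ang x y
    have h2 := Real.pi_pos
    linarith

lemma ccw_le_two_pi (x y : ℂ × ℂ) : ccw x y ≤ 2 * Real.pi := by
  unfold ccw; split
  · have h1 := ang_le_pi x y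
    have h2 := Real.pi_pos
    linarith
  · next h =>
      have : ang x y ≤ 0 := not_lt.mp h
      linarith

lemma ccw_coe (x y : ℂ × ℂ) : ((ccw x y : ℝ) : Real.Angle) = (ang x y : Real.Angle) := by
  unfold ccw; split
  · rfl
  · rw [Real.Angle.coe_add, Real.Angle.coe_two_pi, add_zero]

lemma real_of_angle_eq {a b : ℝ} (h : (a : Real.Angle) = (b : Real.Angle))
    (h2 : |a - b| < 2 * Real.pi) : a = b := by
  obtain ⟨k, hk⟩ := Real.Angle.angle_eq_iff_two_pi_dvd_sub.mp h
  rcases eq_or_ne k 0 with h0 | h0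
  · rw [h0] at hk; push_cast at hk; linarith
  · exfalso
    have h1 : (1 : ℝ) ≤ |(k : ℝ)| := by
      have := Int.one_le_abs h0
      calc (1:ℝ) ≤ (|k| : ℤ) := by exact_mod_cast this
        _ = |(k:ℝ)| := by push_cast; rfl
    rw [hk] at h2
    rw [abs_mul] at h2
    have hpi : |2 * Real.pi| = 2 * Real.pi := abs_of_pos (by positivity)
    rw [hpi] at h2
    nlinarith [Real.pi_pos]

lemma ang_rev_right {x y : ℂ × ℂ} (hx : x.2 - x.1 ≠ 0) (hy : y.2 - y.1 ≠ 0)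
    (h : 0 < ang x y) : ang x (rev y) = ang x y - Real.pi := by
  set q := (y.2 - y.1) / (x.2 - x.1) with hqdef
  have hq : q ≠ 0 := div_ne_zero hy hx
  have hrw : ang x (rev y) = Complex.arg (-q) := by
    simp only [ang, rev, hqdef]
    rw [show y.1 - y.2 = -(y.2 - y.1) by ring, neg_div]
  have hang : ang x y = Complex.arg q := rfl
  rcases lt_trichotomy q.im 0 with him | him | him
  · exact absurd (Complex.arg_neg_iff.mpr him) (by rw [← hang]; linarith)
  · -- q real; arg q > 0 forces arg q = π
    have hre : q.re < 0 := by
      by_contra hre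
      push_neg at hre
      have := Complex.arg_eq_zero_iff.mpr ⟨hre, him⟩
      rw [← hang] at this; linarith
    have hpi : Complex.arg q = Real.pi := Complex.arg_eq_pi_iff.mpr ⟨hre, him⟩
    have : Complex.arg (-q) = 0 := by
      apply Complex.arg_eq_zero_iff.mpr
      constructor
      · simp only [Complex.neg_re]; linarith
      · simp only [Complex.neg_im]; linarith
    rw [hrw, this, hang, hpi]; ring
  · rw [hrw, Complex.arg_neg_eq_arg_sub_pi_of_im_pos him, hang]

lemma uv_eq_of_ang_eq_zero {x y : ℂ × ℂ} (hx : x.2 - x.1 ≠ 0) (hy : y.2 - y.1 ≠ 0)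
    (h : ang x y = 0) : uv y = uv x := by
  have := exp_ang hx hy
  rw [h] at this
  rw [show ((0:ℝ):ℂ) * Complex.I = 0 by simp, Complex.exp_zero] at this
  have hux := uv_ne_zero hx
  field_simp at this
  exact this.symm

lemma ang_eq_zero_of_uv_eq {x y : ℂ × ℂ} (hx : x.2 - x.1 ≠ 0) (hy : y.2 - y.1 ≠ 0)
    (h : uv y = uv x) : ang x y = 0 := by
  unfold ang
  have hax : (Complex.abs (x.2 - x.1) : ℂ) ≠ 0 := by
    simp only [ne_eq, ofReal_eq_zero, map_eq_zero]; exact hx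
  have hay : (Complex.abs (y.2 - y.1) : ℂ) ≠ 0 := by
    simp only [ne_eq, ofReal_eq_zero, map_eq_zero]; exact hy
  have key : (y.2 - y.1) * (Complex.abs (x.2 - x.1) : ℂ)
      = (x.2 - x.1) * (Complex.abs (y.2 - y.1) : ℂ) := by
    have hh := h
    unfold uv at hh
    field_simp at hh
    linear_combination hh
  have h1 : (y.2 - y.1) / (x.2 - x.1)
      = ((Complex.abs (y.2 - y.1) / Complex.abs (x.2 - x.1) : ℝ) : ℂ) := by
    push_cast
    rw [div_eq_div_iff hx hax]
    linear_combination key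
  rw [h1]
  apply Complex.arg_ofReal_of_nonneg
  positivity

-- ang x (rev y) = π when parallel
lemma ang_rev_of_uv_eq {x y : ℂ × ℂ} (hx : x.2 - x.1 ≠ 0) (hy : y.2 - y.1 ≠ 0)
    (h : uv y = uv x) : ang x (rev y) = Real.pi := by
  have hax : (Complex.abs (x.2 - x.1) : ℂ) ≠ 0 := by
    simp only [ne_eq, ofReal_eq_zero, map_eq_zero]; exact hx
  have hay : (Complex.abs (y.2 - y.1) : ℂ) ≠ 0 := by
    simp only [ne_eq, ofReal_eq_zero, map_eq_zero]; exact hy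
  have key : (y.2 - y.1) * (Complex.abs (x.2 - x.1) : ℂ)
      = (x.2 - x.1) * (Complex.abs (y.2 - y.1) : ℂ) := by
    have hh := h
    unfold uv at hh
    field_simp at hh
    linear_combination hh
  have h1 : (y.2 - y.1) / (x.2 - x.1)
      = ((Complex.abs (y.2 - y.1) / Complex.abs (x.2 - x.1) : ℝ) : ℂ) := by
    push_cast
    rw [div_eq_div_iff hx hax]
    linear_combination key
  have hrw : ang x (rev y) = Complex.arg (-((y.2 - y.1) / (x.2 - x.1))) := by
    simp only [ang, rev]
    rw [show y.1 - y.2 = -(y.2 - y.1) by ring, neg_div]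
  rw [hrw, h1]
  rw [show -((Complex.abs (y.2-y.1) / Complex.abs (x.2-x.1) : ℝ) : ℂ)
      = ((-(Complex.abs (y.2-y.1) / Complex.abs (x.2-x.1)) : ℝ) : ℂ) by push_cast; ring]
  apply Complex.arg_eq_pi_iff.mpr
  constructor
  · simp only [Complex.ofReal_re]
    have : 0 < Complex.abs (y.2-y.1) / Complex.abs (x.2-x.1) := by
      apply div_pos <;> simpa [AbsoluteValue.pos_iff]
    linarith
  · simp

lemma ang_eq_of_ccw_eq {a x y : ℂ × ℂ} (h : ccw a x = ccw a y) : ang a x = ang a y := by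
  unfold ccw at h
  split at h <;> split at h
  · exact h
  · exfalso
    have h1 : ang a y ≤ 0 := not_lt.mp (by assumption)
    have := neg_pi_lt_ang a y
    have := ang_le_pi a x
    nlinarith [Real.pi_pos]
  · exfalso
    have h1 : ang a x ≤ 0 := not_lt.mp (by assumption)
    have := neg_pi_lt_ang a x
    have := ang_le_pi a y
    nlinarith [Real.pi_pos]
  · linarith


-- S1: graph basics

def outF (Γ : Isoradial) (z : ℂ) : Finset (ℂ × ℂ) := (Γ.finOut z).toFinset

lemma mem_outF {Γ : Isoradial} {z : ℂ} {g : ℂ × ℂ} :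
    g ∈ outF Γ z ↔ g ∈ Γ.D ∧ g.1 = z := by
  simp [outF, Set.Finite.mem_toFinset, Set.mem_setOf_eq]

def inF (Γ : Isoradial) (z : ℂ) : Finset (ℂ × ℂ) := (outF Γ z).image rev

lemma mem_inF {Γ : Isoradial} {z : ℂ} {g : ℂ × ℂ} :
    g ∈ inF Γ z ↔ g ∈ Γ.D ∧ g.2 = z := by
  simp only [inF, Finset.mem_image]
  constructor
  · rintro ⟨a, ha, rfl⟩
    obtain ⟨haD, ha1⟩ := mem_outF.mp ha
    exact ⟨Γ.symm a haD, ha1⟩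
  · rintro ⟨hD, h2⟩
    exact ⟨rev g, mem_outF.mpr ⟨Γ.symm g hD, h2⟩, rev_rev g⟩

lemma dir_ne {Γ : Isoradial} {x : ℂ × ℂ} (hx : x ∈ Γ.D) : x.2 - x.1 ≠ 0 :=
  sub_ne_zero.mpr (Ne.symm (Γ.nd x hx))

lemma outF_eq_image {Γ : Isoradial} {z : ℂ} : outF Γ z = (inF Γ z).image rev := by
  rw [inF, Finset.image_image]
  have : rev ∘ rev = id := funext rev_rev
  rw [this, Finset.image_id]

lemma sum_inF {M : Type*} [AddCommMonoid M] {Γ : Isoradial} {z : ℂ} (f : (ℂ × ℂ) → M) :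
    ∑ g ∈ outF Γ z, f g = ∑ x ∈ inF Γ z, f (rev x) := by
  rw [outF_eq_image]
  exact Finset.sum_image (fun a _ b _ h => rev_inj h)

lemma card_inF {Γ : Isoradial} {z : ℂ} : (inF Γ z).card = (outF Γ z).card :=
  Finset.card_image_of_injective _ rev_inj

lemma thetaSum {Γ : Isoradial} {z : ℂ} (h : (outF Γ z).Nonempty) :
    ∑ g ∈ outF Γ z, Γ.θ (ue g) = Real.pi := by
  obtain ⟨g, hg⟩ := h
  obtain ⟨hgD, hg1⟩ := mem_outF.mp hg
  exact Γ.angleSum z ⟨g, hgD, hg1⟩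

lemma thetaSum_in {Γ : Isoradial} {z : ℂ} (h : (inF Γ z).Nonempty) :
    ∑ x ∈ inF Γ z, Γ.θ (ue x) = Real.pi := by
  have h2 : (outF Γ z).Nonempty := by
    obtain ⟨x, hx⟩ := h
    exact ⟨rev x, mem_outF.mpr ⟨Γ.symm x (mem_inF.mp hx).1, (mem_inF.mp hx).2⟩⟩
  rw [← thetaSum h2, sum_inF (fun x => Γ.θ (ue x))]
  exact Finset.sum_congr rfl (fun x _ => by rw [ue_rev])

lemma two_le_card_outF {Γ : Isoradial} {z : ℂ} {g : ℂ × ℂ}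
    (hg : g ∈ Γ.D) (h1 : g.1 = z) : 2 ≤ (outF Γ z).card := by
  have hmem : g ∈ outF Γ z := mem_outF.mpr ⟨hg, h1⟩
  have h1c : 1 ≤ (outF Γ z).card := Finset.card_pos.mpr ⟨g, hmem⟩
  rcases eq_or_lt_of_le h1c with hc | hc
  · exfalso
    obtain ⟨a, ha⟩ := Finset.card_eq_one.mp hc.symm
    have hag : g = a := by rw [ha] at hmem; exact Finset.mem_singleton.mp hmem
    have := thetaSum (Γ := Γ) (z := z) ⟨g, hmem⟩
    rw [ha, Finset.sum_singleton, ← hag] at this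
    exact absurd this (ne_of_lt (Γ.θlt g hg))
  · exact hc

lemma two_le_card_inF {Γ : Isoradial} {z : ℂ} {g : ℂ × ℂ}
    (hg : g ∈ Γ.D) (h2 : g.2 = z) : 2 ≤ (inF Γ z).card := by
  rw [card_inF]
  exact two_le_card_outF (Γ.symm g hg) h2

-- ccw with common base formula
lemma ccw_formula {p a b : ℂ × ℂ} (hp : p.2 - p.1 ≠ 0) (ha : a.2 - a.1 ≠ 0)
    (hb : b.2 - b.1 ≠ 0) :
    ccw a b = if ccw p a < ccw p b then ccw p b - ccw p a
      else ccw p b - ccw p a + 2 * Real.pi := by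
  have hadd : (ang p a : Real.Angle) + (ang a b : Real.Angle) = (ang p b : Real.Angle) :=
    ang_angle_add hp ha hb
  have hang : ((ccw a b : ℝ) : Real.Angle)
      = ((ccw p b - ccw p a : ℝ) : Real.Angle) := by
    rw [ccw_coe]
    have : ((ccw p b - ccw p a : ℝ) : Real.Angle)
        = ((ccw p b : ℝ) : Real.Angle) - ((ccw p a : ℝ) : Real.Angle) := by
      push_cast [Real.Angle.coe_sub]; rfl
    rw [this, ccw_coe, ccw_coe]
    rw [← hadd]; abel
  have h1 := ccw_pos p a
  have h2 := ccw_pos p b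
  have h3 := ccw_le_two_pi p a
  have h4 := ccw_le_two_pi p b
  have h5 := ccw_pos a b
  have h6 := ccw_le_two_pi a b
  split
  · next hlt =>
    apply real_of_angle_eq
    · exact hang
    · rw [abs_lt]; constructor <;> linarith
  · next hge =>
    have hge' : ccw p b ≤ ccw p a := not_lt.mp hge
    apply real_of_angle_eq
    · rw [hang]
      have : ((ccw p b - ccw p a + 2 * Real.pi : ℝ) : Real.Angle)
          = ((ccw p b - ccw p a : ℝ) : Real.Angle) + ((2 * Real.pi : ℝ) : Real.Angle) :=
        Real.Angle.coe_add _ _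
      rw [this, Real.Angle.coe_two_pi, add_zero]
    · rw [abs_lt]; constructor <;> linarith

lemma ccw_eq_two_pi_iff {x y : ℂ × ℂ} : ccw x y = 2 * Real.pi ↔ ang x y = 0 := by
  unfold ccw
  have h1 := ang_le_pi x y
  have h2 := Real.pi_pos
  split
  · next h => constructor <;> intro hh <;> linarith
  · next h => constructor <;> intro hh <;> linarith

lemma no_parallel {Γ : Isoradial} {z : ℂ} {p p' : ℂ × ℂ}
    (hp : p ∈ inF Γ z) (hp' : p' ∈ inF Γ z) (huv : uv p' = uv p) : p = p' := by
  by_contra hne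
  obtain ⟨hpD, hpz⟩ := mem_inF.mp hp
  obtain ⟨hp'D, hp'z⟩ := mem_inF.mp hp'
  have hdp := dir_ne hpD
  have hdp' := dir_ne hp'D
  -- helper to build ConsecIn from a minimality over inF
  have hcons : ∀ q r : ℂ × ℂ, q ∈ inF Γ z → r ∈ inF Γ z → q ≠ r →
      (∀ g ∈ inF Γ z, g ≠ q → g ≠ r → ccw q r ≤ ccw q g) → ConsecIn Γ.D z q r := by
    intro q r hq hr hqr hmin
    obtain ⟨hqD, hqz⟩ := mem_inF.mp hq
    obtain ⟨hrD, hrz⟩ := mem_inF.mp hr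
    refine ⟨hqD, hrD, hqz, hrz, hqr, ?_⟩
    intro g hgD hgz hgq hgr
    rw [ccw_rev_rev, ccw_rev_rev]
    exact hmin g (mem_inF.mpr ⟨hgD, hgz⟩) hgq hgr
  have hangpp' : ang p p' = 0 := ang_eq_zero_of_uv_eq hdp hdp' huv
  by_cases hall : ∀ x ∈ inF Γ z, uv x = uv p
  · -- all parallel
    have hcc : ConsecIn Γ.D z p p' := by
      apply hcons p p' hp hp' hne
      intro g hg _ _
      obtain ⟨hgD, hgz⟩ := mem_inF.mp hg
      have h1 : ccw p p' = 2 * Real.pi := ccw_eq_two_pi_iff.mpr hangpp'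
      have h2 : ccw p g = 2 * Real.pi := ccw_eq_two_pi_iff.mpr
        (ang_eq_zero_of_uv_eq hdp (dir_ne hgD) (hall g hg))
      rw [h1, h2]
    have := Γ.consecAngle z p p' hcc
    rw [hangpp'] at this
    have := Γ.θpos p hpD
    have := Γ.θpos p' hp'D
    linarith
  · push_neg at hall
    obtain ⟨x0, hx0, hx0uv⟩ := hall
    have hsne : ((inF Γ z).filter (fun g => uv g ≠ uv p)).Nonempty :=
      ⟨x0, Finset.mem_filter.mpr ⟨hx0, hx0uv⟩⟩
    obtain ⟨q, hqs, hqmax⟩ :=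
      Finset.exists_max_image ((inF Γ z).filter (fun g => uv g ≠ uv p))
        (fun g => ccw p g) hsne
    obtain ⟨hq, hquv⟩ := Finset.mem_filter.mp hqs
    obtain ⟨hqD, hqz⟩ := mem_inF.mp hq
    have hdq := dir_ne hqD
    have hqp : q ≠ p := fun h => hquv (by rw [h])
    have hqp' : q ≠ p' := fun h => hquv (by rw [h, huv])
    have hccpp : ccw p p = 2 * Real.pi := ccw_eq_two_pi_iff.mpr (ang_self hdp)
    have hccpp' : ccw p p' = 2 * Real.pi := ccw_eq_two_pi_iff.mpr hangpp'
    have hqlt : ccw p q < 2 * Real.pi := by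
      rcases lt_or_eq_of_le (ccw_le_two_pi p q) with h | h
      · exact h
      · exact absurd (uv_eq_of_ang_eq_zero hdp hdq (ccw_eq_two_pi_iff.mp h)) hquv
    -- min property over all of inF except q and target r with ccw p r = 2π
    have hminmain : ∀ r : ℂ × ℂ, r ∈ inF Γ z → ccw p r = 2 * Real.pi → q ≠ r →
        ConsecIn Γ.D z q r := by
      intro r hr hccr hqr
      apply hcons q r hq hr hqr
      intro g hg hgq hgr
      obtain ⟨hgD, hgz⟩ := mem_inF.mp hg
      have hdg := dir_ne hgD
      obtain ⟨hrD, hrz⟩ := mem_inF.mp hr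
      have hdr := dir_ne hrD
      have e1 : ccw q r = ccw p r - ccw p q := by
        rw [ccw_formula hdp hdq hdr, if_pos (by rw [hccr]; exact hqlt)]
      have e2 : ccw q g = if ccw p q < ccw p g then ccw p g - ccw p q
          else ccw p g - ccw p q + 2 * Real.pi := ccw_formula hdp hdq hdg
      rw [e1, e2, hccr]
      split
      · next h =>
        by_cases hguv : uv g = uv p
        · have : ccw p g = 2 * Real.pi := ccw_eq_two_pi_iff.mpr
            (ang_eq_zero_of_uv_eq hdp hdg hguv)
          rw [this]
        · have := hqmax g (Finset.mem_filter.mpr ⟨hg, hguv⟩)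
          linarith
      · next h =>
        have := ccw_pos p g
        linarith
    have hc1 : ConsecIn Γ.D z q p := hminmain p hp hccpp hqp
    have hc2 := Γ.consecAngle z q p hc1
    have hrevD : rev p' ∈ Γ.D := Γ.symm p' hp'D
    have haa := Γ.angAdd z q p (rev p') hc1 hrevD hp'z
      (fun h => hqp' (rev_inj h).symm) (fun h => hne (rev_inj h).symm)
    have hpi : ang p (rev p') = Real.pi := ang_rev_of_uv_eq hdp hdp' huv
    have hle := ang_le_pi q (rev p')
    rw [hc2, hpi] at haa
    have := Γ.θpos q hqD
    have := Γ.θpos p hpD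
    linarith [haa, hle]

-- S2: cyclic enumeration of incoming edges

lemma enum_spec (Γ : Isoradial) (z : ℂ) (e₀ : ℂ × ℂ) (h0 : e₀ ∈ Γ.D) (hz : e₀.2 = z) :
    ∃ es : ℕ → ℂ × ℂ, es 0 = e₀ ∧
      (∀ m, m < (inF Γ z).card → es m ∈ inF Γ z) ∧
      (∀ m n, m < (inF Γ z).card → n < (inF Γ z).card → es m = es n → m = n) ∧
      (∀ x ∈ inF Γ z, ∃ m, m < (inF Γ z).card ∧ es m = x) ∧
      (∀ m, m + 1 < (inF Γ z).card → ConsecIn Γ.D z (es m) (es (m + 1))) := by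
  classical
  set d := (inF Γ z).card with hd
  have he0 : e₀ ∈ inF Γ z := mem_inF.mpr ⟨h0, hz⟩
  set κ : (ℂ × ℂ) → ℝ := fun g => if g = e₀ then 0 else ccw e₀ g with hκ
  have hde0 := dir_ne h0
  -- κ properties on inF
  have hκ0 : κ e₀ = 0 := by simp [hκ]
  have hκrange : ∀ g ∈ inF Γ z, 0 ≤ κ g ∧ κ g < 2 * Real.pi := by
    intro g hg
    by_cases h : g = e₀
    · subst h
      rw [hκ0]
      exact ⟨le_refl 0, by positivity⟩
    · have h1 : κ g = ccw e₀ g := by simp [hκ, h]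
      rw [h1]
      refine ⟨(ccw_pos e₀ g).le, ?_⟩
      rcases lt_or_eq_of_le (ccw_le_two_pi e₀ g) with hh | hh
      · exact hh
      · exfalso
        have := uv_eq_of_ang_eq_zero hde0 (dir_ne (mem_inF.mp hg).1) (ccw_eq_two_pi_iff.mp hh)
        exact h (no_parallel hg he0 this.symm)
  have hκangle : ∀ g, g.2 - g.1 ≠ 0 → ((κ g : ℝ) : Real.Angle) = (ang e₀ g : Real.Angle) := by
    intro g hdg
    by_cases h : g = e₀
    · subst h; rw [hκ0, ang_self hde0]
    · have h1 : κ g = ccw e₀ g := by simp [hκ, h]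
      rw [h1, ccw_coe]
  have hκinj : ∀ a ∈ inF Γ z, ∀ b ∈ inF Γ z, κ a = κ b → a = b := by
    intro a ha b hb hab
    by_cases h1 : a = e₀ <;> by_cases h2 : b = e₀
    · rw [h1, h2]
    · exfalso
      rw [h1, hκ0] at hab
      have : κ b = ccw e₀ b := by simp [hκ, h2]
      rw [this] at hab
      exact absurd hab.symm (ne_of_gt (ccw_pos e₀ b))
    · exfalso
      rw [h2, hκ0] at hab
      have : κ a = ccw e₀ a := by simp [hκ, h1]
      rw [this] at hab
      exact absurd hab (ne_of_gt (ccw_pos e₀ a))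
    · have ha' : κ a = ccw e₀ a := by simp [hκ, h1]
      have hb' : κ b = ccw e₀ b := by simp [hκ, h2]
      rw [ha', hb'] at hab
      have hang := ang_eq_of_ccw_eq hab
      have hda := dir_ne (mem_inF.mp ha).1
      have hdb := dir_ne (mem_inF.mp hb).1
      have h3 := exp_ang hde0 hda
      have h4 := exp_ang hde0 hdb
      rw [hang] at h3
      rw [h3] at h4
      have huv0 : uv e₀ ≠ 0 := uv_ne_zero hde0
      have : uv a = uv b := by
        field_simp at h4
        exact h4
      exact no_parallel ha hb this.symm
  -- the κ-comparison formula specialised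
  have hcmp : ∀ a ∈ inF Γ z, ∀ b ∈ inF Γ z, a ≠ b →
      ccw a b = if κ a < κ b then κ b - κ a else κ b - κ a + 2 * Real.pi := by
    intro a ha b hb hab
    have hda := dir_ne (mem_inF.mp ha).1
    have hdb := dir_ne (mem_inF.mp hb).1
    have hκa := hκrange a ha
    have hκb := hκrange b hb
    have hne : κ a ≠ κ b := fun h => hab (hκinj a ha b hb h)
    have hang : ((ccw a b : ℝ) : Real.Angle)
        = ((κ b - κ a : ℝ) : Real.Angle) := by
      rw [ccw_coe]
      have hadd : (ang e₀ a : Real.Angle) + (ang a b : Real.Angle) = (ang e₀ b : Real.Angle) :=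
        ang_angle_add hde0 hda hdb
      have : ((κ b - κ a : ℝ) : Real.Angle)
          = ((κ b : ℝ) : Real.Angle) - ((κ a : ℝ) : Real.Angle) := Real.Angle.coe_sub _ _
      rw [this, hκangle a hda, hκangle b hdb, ← hadd]; abel
    have h5 := ccw_pos a b
    have h6 := ccw_le_two_pi a b
    split
    · next hlt =>
      apply real_of_angle_eq hang
      rw [abs_lt]; constructor <;> [linarith [hκb.2]; linarith [hκa.1]]
    · next hge =>
      have hge' : κ b < κ a := lt_of_le_of_ne (not_lt.mp hge) hne.symm
      apply real_of_angle_eq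
      · rw [hang]
        rw [show (κ b - κ a + 2 * Real.pi : ℝ) = (κ b - κ a) + 2 * Real.pi by ring,
          Real.Angle.coe_add, Real.Angle.coe_two_pi, add_zero]
      · rw [abs_lt]; constructor <;> [linarith [hκa.2]; linarith [hκb.1, hκa.2, hκb.2]]
  -- the sorted enumeration
  set km : Finset ℝ := (inF Γ z).image κ with hkm
  have hcard : km.card = d := by
    rw [hkm, hd]
    apply Finset.card_image_of_injOn
    intro a ha b hb hab
    exact hκinj a ha b hb hab
  set σ : Fin d ≃o {x // x ∈ km} := km.orderIsoOfFin hcard with hσ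
  have hmemσ : ∀ m : Fin d, ((σ m : ℝ)) ∈ km := fun m => (σ m).2
  have hEU : ∀ m : Fin d, ∃! x, x ∈ inF Γ z ∧ κ x = (σ m : ℝ) := by
    intro m
    obtain ⟨x, hx, hxe⟩ := Finset.mem_image.mp (hmemσ m)
    refine ⟨x, ⟨hx, hxe⟩, ?_⟩
    rintro y ⟨hy, hye⟩
    exact hκinj y hy x hx (by rw [hye, hxe])
  set ES : Fin d → ℂ × ℂ := fun m => Finset.choose _ _ (hEU m) with hES
  have hESmem : ∀ m, ES m ∈ inF Γ z := fun m => (Finset.choose_spec _ _ (hEU m)).1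
  have hESκ : ∀ m, κ (ES m) = (σ m : ℝ) := fun m => (Finset.choose_spec _ _ (hEU m)).2
  have hESmono : ∀ m n : Fin d, m < n → κ (ES m) < κ (ES n) := by
    intro m n hmn
    rw [hESκ m, hESκ n]
    exact_mod_cast (σ.strictMono hmn)
  set es : ℕ → ℂ × ℂ := fun m => if h : m < d then ES ⟨m, h⟩ else e₀ with hes
  have hesm : ∀ m (h : m < d), es m = ES ⟨m, h⟩ := by
    intro m h; simp [hes, h]
  -- surjectivity
  have hsurj : ∀ x ∈ inF Γ z, ∃ m, m < d ∧ es m = x := by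
    intro x hx
    have : κ x ∈ km := Finset.mem_image_of_mem κ hx
    set j := σ.symm ⟨κ x, this⟩ with hj
    have : (σ j : ℝ) = κ x := by rw [hj]; simp
    refine ⟨j.1, j.2, ?_⟩
    rw [hesm j.1 j.2]
    apply hκinj _ (hESmem _) _ hx
    have : ES ⟨j.1, j.2⟩ = ES j := by congr
    rw [this, hESκ j]
    exact ‹(σ j : ℝ) = κ x›
  -- injectivity
  have hinj : ∀ m n, m < d → n < d → es m = es n → m = n := by
    intro m n hm hn hmn
    rw [hesm m hm, hesm n hn] at hmn
    by_contra hne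
    rcases Nat.lt_or_ge m n with h | h
    · have := hESmono ⟨m, hm⟩ ⟨n, hn⟩ (Fin.mk_lt_mk.mpr h)
      rw [hmn] at this; exact lt_irrefl _ this
    · have h' : n < m := by omega
      have := hESmono ⟨n, hn⟩ ⟨m, hm⟩ (Fin.mk_lt_mk.mpr h')
      rw [hmn] at this; exact lt_irrefl _ this
  -- es 0 = e₀
  have hd2 : 2 ≤ d := two_le_card_inF h0 hz
  have h0d : 0 < d := by omega
  have hes0 : es 0 = e₀ := by
    obtain ⟨m, hm, hmx⟩ := hsurj e₀ he0
    have hσm : (σ ⟨m, hm⟩ : ℝ) = 0 := by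
      have h1 : κ (es m) = (σ ⟨m, hm⟩ : ℝ) := by rw [hesm m hm]; exact hESκ _
      rw [hmx, hκ0] at h1
      exact h1.symm
    have hσ0le : (σ ⟨0, h0d⟩ : ℝ) ≤ (σ ⟨m, hm⟩ : ℝ) := by
      have : (⟨0, h0d⟩ : Fin d) ≤ ⟨m, hm⟩ := by simp
      exact_mod_cast σ.monotone this
    have hσ0mem := hmemσ ⟨0, h0d⟩
    obtain ⟨x, hx, hxe⟩ := Finset.mem_image.mp hσ0mem
    have hge : 0 ≤ (σ ⟨0, h0d⟩ : ℝ) := by rw [← hxe]; exact (hκrange x hx).1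
    have hσ00 : (σ ⟨0, h0d⟩ : ℝ) = 0 := le_antisymm (hσm ▸ hσ0le) hge
    rw [hesm 0 h0d]
    apply hκinj _ (hESmem _) _ he0
    rw [hESκ, hσ00, hκ0]
  -- consecutive property
  have hconsec : ∀ m, m + 1 < d → ConsecIn Γ.D z (es m) (es (m + 1)) := by
    intro m hm1
    have hm : m < d := by omega
    have hmem1 := hESmem ⟨m, hm⟩
    have hmem2 := hESmem ⟨m + 1, hm1⟩
    rw [hesm m hm, hesm (m+1) hm1]
    have hab : κ (ES ⟨m, hm⟩) < κ (ES ⟨m+1, hm1⟩) :=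
      hESmono _ _ (Fin.mk_lt_mk.mpr (Nat.lt_succ_self m))
    have hneq : ES ⟨m, hm⟩ ≠ ES ⟨m+1, hm1⟩ := fun h => by
      rw [h] at hab; exact lt_irrefl _ hab
    obtain ⟨haD, haz⟩ := mem_inF.mp hmem1
    obtain ⟨hbD, hbz⟩ := mem_inF.mp hmem2
    refine ⟨haD, hbD, haz, hbz, hneq, ?_⟩
    intro g hgD hgz hga hgb
    rw [ccw_rev_rev, ccw_rev_rev]
    have hg : g ∈ inF Γ z := mem_inF.mpr ⟨hgD, hgz⟩
    obtain ⟨j, hj, hjg⟩ := hsurj g hg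
    rw [hesm j hj] at hjg
    have hjm : j ≠ m := by
      intro h; subst h; exact hga hjg.symm
    have hjm1 : j ≠ m + 1 := by
      intro h; subst h; exact hgb hjg.symm
    -- κ g vs
    have hκg : κ g = (σ ⟨j, hj⟩ : ℝ) := by rw [← hjg, hESκ]
    have e1 : ccw (ES ⟨m, hm⟩) (ES ⟨m+1, hm1⟩)
        = κ (ES ⟨m+1, hm1⟩) - κ (ES ⟨m, hm⟩) := by
      rw [hcmp _ hmem1 _ hmem2 hneq, if_pos hab]
    have e2 : ccw (ES ⟨m, hm⟩) g = if κ (ES ⟨m, hm⟩) < κ g then κ g - κ (ES ⟨m, hm⟩)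
        else κ g - κ (ES ⟨m, hm⟩) + 2 * Real.pi := by
      apply hcmp _ hmem1 _ hg
      intro h; exact hga (h ▸ rfl)
    rw [e1, e2]
    rcases Nat.lt_or_ge j m with hcase | hcase
    · -- κ g < κ (ES m): else branch
      have hlt : κ g < κ (ES ⟨m, hm⟩) := by
        rw [hκg, hESκ]
        exact_mod_cast σ.strictMono (Fin.mk_lt_mk.mpr hcase)
      rw [if_neg (by linarith)]
      have hb2 := (hκrange _ hmem2).2
      have hg0 := (hκrange g hg).1
      linarith
    · have hcase2 : m + 1 < j := by omega
      have hgt : κ (ES ⟨m+1, hm1⟩) < κ g := by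
        rw [hκg, hESκ]
        exact_mod_cast σ.strictMono (Fin.mk_lt_mk.mpr hcase2)
      rw [if_pos (by linarith)]
      linarith
  exact ⟨es, hes0, fun m hm => by rw [hesm m hm]; exact hESmem _, hinj, hsurj, hconsec⟩

-- S3: closed forms and the key identity

lemma conj_exp_real (r : ℝ) :
    (starRingEnd ℂ) (Complex.exp ((r : ℂ) * Complex.I))
      = Complex.exp (((-r : ℝ) : ℂ) * Complex.I) := by
  rw [← Complex.exp_conj]
  congr 1
  simp only [map_mul, Complex.conj_ofReal, Complex.conj_I]
  push_cast
  ring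

lemma exp_add_exp_neg (x : ℝ) :
    Complex.exp (((x : ℝ) : ℂ) * Complex.I) + Complex.exp (((-x : ℝ) : ℂ) * Complex.I)
      = 2 * ((Real.cos x : ℝ) : ℂ) := by
  rw [Complex.exp_mul_I, Complex.exp_mul_I]
  rw [← Complex.ofReal_cos, ← Complex.ofReal_sin, ← Complex.ofReal_cos, ← Complex.ofReal_sin]
  push_cast [Real.cos_neg, Real.sin_neg]
  ring

lemma exp_neg_pi_half_I :
    Complex.exp (((-(Real.pi / 2) : ℝ) : ℂ) * Complex.I) = -Complex.I := by
  rw [Complex.exp_mul_I, ← Complex.ofReal_cos, ← Complex.ofReal_sin]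
  rw [Real.cos_neg, Real.sin_neg, Real.cos_pi_div_two, Real.sin_pi_div_two]
  push_cast
  ring

lemma uv_eq_exp {e : ℂ × ℂ} (h : e.2 - e.1 ≠ 0) :
    uv e = Complex.exp ((Complex.arg (e.2 - e.1) : ℂ) * Complex.I) := by
  have h0 := Complex.abs_mul_exp_arg_mul_I (e.2 - e.1)
  have habs : (Complex.abs (e.2 - e.1) : ℂ) ≠ 0 := by
    simp only [ne_eq, ofReal_eq_zero, map_eq_zero]; exact h
  rw [uv, div_eq_iff habs]
  linear_combination -h0

lemma final_alg (t w U V : ℂ) (hU : U ≠ 0) (hV : V ≠ 0) :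
    t * ((U - V) / 2) * (1 + w * (U⁻¹ * V⁻¹ * (-1))) / 2
      = t / 4 * ((U - V) + w * (U⁻¹ - V⁻¹)) := by
  field_simp
  ring

lemma tele_term (b b' : ℝ) (w t : ℂ) :
    t * Complex.exp (Complex.I * ((b + b' - Real.pi : ℝ) : ℂ) / 2)
      * (((Real.sin ((b' - b) / 2) : ℝ) : ℂ)
        * (1 + w * Complex.exp (((-(b + b' - Real.pi) : ℝ) : ℂ) * Complex.I)) / 2)
    = t / 4 * ((Complex.exp (((b : ℝ) : ℂ) * Complex.I) - Complex.exp (((b' : ℝ) : ℂ) * Complex.I))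
        + w * (Complex.exp (((-b : ℝ) : ℂ) * Complex.I)
          - Complex.exp (((-b' : ℝ) : ℂ) * Complex.I))) := by
  have hun : Complex.exp (((b / 2 : ℝ) : ℂ) * Complex.I) ≠ 0 := Complex.exp_ne_zero _
  have hvn : Complex.exp (((b' / 2 : ℝ) : ℂ) * Complex.I) ≠ 0 := Complex.exp_ne_zero _
  have h1 : Complex.exp (Complex.I * ((b + b' - Real.pi : ℝ) : ℂ) / 2)
      = Complex.exp (((b / 2 : ℝ) : ℂ) * Complex.I)
        * Complex.exp (((b' / 2 : ℝ) : ℂ) * Complex.I) * (-Complex.I) := by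
    rw [← exp_neg_pi_half_I, ← Complex.exp_add, ← Complex.exp_add]
    congr 1
    push_cast
    ring
  have hsin : ((Real.sin ((b' - b) / 2) : ℝ) : ℂ)
      = (Complex.exp ((-(((b' - b) / 2 : ℝ) : ℂ)) * Complex.I)
        - Complex.exp ((((b' - b) / 2 : ℝ) : ℂ) * Complex.I)) * Complex.I / 2 := by
    rw [Complex.ofReal_sin]
    rfl
  have hA : Complex.exp (((b / 2 : ℝ) : ℂ) * Complex.I)
        * Complex.exp (((b' / 2 : ℝ) : ℂ) * Complex.I)
        * Complex.exp ((-(((b' - b) / 2 : ℝ) : ℂ)) * Complex.I)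
      = Complex.exp (((b / 2 : ℝ) : ℂ) * Complex.I)
        * Complex.exp (((b / 2 : ℝ) : ℂ) * Complex.I) := by
    rw [← Complex.exp_add, ← Complex.exp_add, ← Complex.exp_add]
    congr 1
    push_cast
    ring
  have hB : Complex.exp (((b / 2 : ℝ) : ℂ) * Complex.I)
        * Complex.exp (((b' / 2 : ℝ) : ℂ) * Complex.I)
        * Complex.exp ((((b' - b) / 2 : ℝ) : ℂ) * Complex.I)
      = Complex.exp (((b' / 2 : ℝ) : ℂ) * Complex.I)
        * Complex.exp (((b' / 2 : ℝ) : ℂ) * Complex.I) := by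
    rw [← Complex.exp_add, ← Complex.exp_add, ← Complex.exp_add]
    congr 1
    push_cast
    ring
  have hcomb : Complex.exp (Complex.I * ((b + b' - Real.pi : ℝ) : ℂ) / 2)
      * ((Real.sin ((b' - b) / 2) : ℝ) : ℂ)
      = (Complex.exp (((b / 2 : ℝ) : ℂ) * Complex.I)
          * Complex.exp (((b / 2 : ℝ) : ℂ) * Complex.I)
        - Complex.exp (((b' / 2 : ℝ) : ℂ) * Complex.I)
          * Complex.exp (((b' / 2 : ℝ) : ℂ) * Complex.I)) / 2 := by
    rw [h1, hsin]
    have hII : -Complex.I * Complex.I = 1 := by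
      rw [neg_mul, Complex.I_mul_I]; ring
    linear_combination (-Complex.I * Complex.I / 2) * hA
      - (-Complex.I * Complex.I / 2) * hB
      + ((Complex.exp (((b / 2 : ℝ) : ℂ) * Complex.I)
          * Complex.exp (((b / 2 : ℝ) : ℂ) * Complex.I)
        - Complex.exp (((b' / 2 : ℝ) : ℂ) * Complex.I)
          * Complex.exp (((b' / 2 : ℝ) : ℂ) * Complex.I)) / 2) * hII
  have hb : Complex.exp (((b : ℝ) : ℂ) * Complex.I)
      = Complex.exp (((b / 2 : ℝ) : ℂ) * Complex.I)
        * Complex.exp (((b / 2 : ℝ) : ℂ) * Complex.I) := by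
    rw [← Complex.exp_add]; congr 1; push_cast; ring
  have hb' : Complex.exp (((b' : ℝ) : ℂ) * Complex.I)
      = Complex.exp (((b' / 2 : ℝ) : ℂ) * Complex.I)
        * Complex.exp (((b' / 2 : ℝ) : ℂ) * Complex.I) := by
    rw [← Complex.exp_add]; congr 1; push_cast; ring
  have hnb : Complex.exp (((-b : ℝ) : ℂ) * Complex.I)
      = (Complex.exp (((b / 2 : ℝ) : ℂ) * Complex.I)
        * Complex.exp (((b / 2 : ℝ) : ℂ) * Complex.I))⁻¹ := by
    rw [← hb, ← Complex.exp_neg]; congr 1; push_cast; ring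
  have hnb' : Complex.exp (((-b' : ℝ) : ℂ) * Complex.I)
      = (Complex.exp (((b' / 2 : ℝ) : ℂ) * Complex.I)
        * Complex.exp (((b' / 2 : ℝ) : ℂ) * Complex.I))⁻¹ := by
    rw [← hb', ← Complex.exp_neg]; congr 1; push_cast; ring
  have h2 : Complex.exp (((-(b + b' - Real.pi) : ℝ) : ℂ) * Complex.I)
      = (Complex.exp (((b / 2 : ℝ) : ℂ) * Complex.I)
          * Complex.exp (((b / 2 : ℝ) : ℂ) * Complex.I))⁻¹
        * (Complex.exp (((b' / 2 : ℝ) : ℂ) * Complex.I)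
          * Complex.exp (((b' / 2 : ℝ) : ℂ) * Complex.I))⁻¹ * (-1) := by
    rw [← hnb, ← hnb', ← Complex.exp_pi_mul_I, ← Complex.exp_add, ← Complex.exp_add]
    congr 1
    push_cast
    ring
  have main : t * Complex.exp (Complex.I * ((b + b' - Real.pi : ℝ) : ℂ) / 2)
      * (((Real.sin ((b' - b) / 2) : ℝ) : ℂ)
        * (1 + w * Complex.exp (((-(b + b' - Real.pi) : ℝ) : ℂ) * Complex.I)) / 2)
      = t * (Complex.exp (Complex.I * ((b + b' - Real.pi : ℝ) : ℂ) / 2)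
          * ((Real.sin ((b' - b) / 2) : ℝ) : ℂ))
        * (1 + w * Complex.exp (((-(b + b' - Real.pi) : ℝ) : ℂ) * Complex.I)) / 2 := by
    ring
  rw [main, hcomb, h2, hb, hb', hnb, hnb']
  exact final_alg t w _ _ (mul_ne_zero hun hun) (mul_ne_zero hvn hvn)

lemma dirL_eq (e : ℂ × ℂ) :
    dirL e = Complex.exp (((-(Complex.arg (e.2 - e.1) / 2) : ℝ) : ℂ) * Complex.I) := by
  unfold dirL
  congr 1
  push_cast
  ring

lemma Sproj_dirL {Γ : Isoradial} {f : Sym2 ℂ → ℂ} {e : ℂ × ℂ} {c : ℝ}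
    (hc : f (ue e) = (c : ℂ)) :
    Sproj Γ f e = ((Real.sin (Γ.θ (ue e) / 2)
      * (c * Real.cos (Complex.arg (e.2 - e.1) / 2)) : ℝ) : ℂ) * dirL e := by
  unfold Sproj projL
  rw [hc]
  have hconj : (starRingEnd ℂ) (dirL e)
      = Complex.exp (((Complex.arg (e.2 - e.1) / 2 : ℝ) : ℂ) * Complex.I) := by
    rw [dirL_eq, ← Complex.exp_conj]
    congr 1
    simp only [map_mul, Complex.conj_ofReal, Complex.conj_I]
    push_cast
    ring
  have hre : ((c : ℂ) * (starRingEnd ℂ) (dirL e)).re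
      = c * Real.cos (Complex.arg (e.2 - e.1) / 2) := by
    rw [hconj, Complex.re_ofReal_mul, Complex.exp_ofReal_mul_I_re]
  have hns : Complex.normSq (dirL e) = 1 := by
    rw [Complex.normSq_eq_abs, dirL_eq, Complex.abs_exp]
    simp
  rw [hre, hns]
  push_cast
  ring

lemma Sproj_closed {Γ : Isoradial} {f : Sym2 ℂ → ℂ} {e : ℂ × ℂ} {c : ℝ}
    (hc : f (ue e) = (c : ℂ)) (hde : e.2 - e.1 ≠ 0) :
    Sproj Γ f e = ((Real.sin (Γ.θ (ue e) / 2) * c : ℝ) : ℂ)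
      * (1 + (starRingEnd ℂ) (uv e)) / 2 := by
  rw [Sproj_dirL hc, dirL_eq]
  have h1 : (starRingEnd ℂ) (uv e)
      = Complex.exp (((-(Complex.arg (e.2 - e.1)) : ℝ) : ℂ) * Complex.I) := by
    rw [uv_eq_exp hde]
    exact conj_exp_real _
  rw [h1]
  have hXY : Complex.exp (((Complex.arg (e.2 - e.1) / 2 : ℝ) : ℂ) * Complex.I)
      * Complex.exp (((-(Complex.arg (e.2 - e.1) / 2) : ℝ) : ℂ) * Complex.I) = 1 := by
    rw [← Complex.exp_add, ← Complex.exp_zero]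
    congr 1
    push_cast
    ring
  have hYY : Complex.exp (((-(Complex.arg (e.2 - e.1) / 2) : ℝ) : ℂ) * Complex.I)
      * Complex.exp (((-(Complex.arg (e.2 - e.1) / 2) : ℝ) : ℂ) * Complex.I)
      = Complex.exp (((-(Complex.arg (e.2 - e.1)) : ℝ) : ℂ) * Complex.I) := by
    rw [← Complex.exp_add]
    congr 1
    push_cast
    ring
  have h2c : ((Real.cos (Complex.arg (e.2 - e.1) / 2) : ℝ) : ℂ)
      = (Complex.exp (((Complex.arg (e.2 - e.1) / 2 : ℝ) : ℂ) * Complex.I)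
        + Complex.exp (((-(Complex.arg (e.2 - e.1) / 2) : ℝ) : ℂ) * Complex.I)) / 2 := by
    linear_combination - (exp_add_exp_neg (Complex.arg (e.2 - e.1) / 2)) / 2
  have hkey : ((Real.cos (Complex.arg (e.2 - e.1) / 2) : ℝ) : ℂ)
      * Complex.exp (((-(Complex.arg (e.2 - e.1) / 2) : ℝ) : ℂ) * Complex.I)
      = (1 + Complex.exp (((-(Complex.arg (e.2 - e.1)) : ℝ) : ℂ) * Complex.I)) / 2 := by
    rw [h2c]
    linear_combination hXY / 2 + hYY / 2
  rw [show ((Real.sin (Γ.θ (ue e) / 2) * (c * Real.cos (Complex.arg (e.2 - e.1) / 2)) : ℝ) : ℂ)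
      = ((Real.sin (Γ.θ (ue e) / 2) * c : ℝ) : ℂ)
        * ((Real.cos (Complex.arg (e.2 - e.1) / 2) : ℝ) : ℂ) by push_cast; ring]
  rw [mul_assoc, hkey]
  ring

-- S4: the key lemma: T (S 1) = 0 on the graph

lemma KW_Sone (Γ : Isoradial) {e₀ : ℂ × ℂ} (h0 : e₀ ∈ Γ.D) :
    KWop Γ (critX Γ) (Sproj Γ (fun _ => 1)) e₀ = 0 := by
  classical
  obtain ⟨es, hes0, hmem, hinj, hsurj, hconsec⟩ := enum_spec Γ e₀.2 e₀ h0 rfl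
  set d := (inF Γ e₀.2).card with hd
  have hd2 : 2 ≤ d := two_le_card_inF h0 rfl
  have hde0 : e₀.2 - e₀.1 ≠ 0 := dir_ne h0
  have hmemD : ∀ m, m < d → es m ∈ Γ.D := fun m hm => (mem_inF.mp (hmem m hm)).1
  have hmemz : ∀ m, m < d → (es m).2 = e₀.2 := fun m hm => (mem_inF.mp (hmem m hm)).2
  have hdir : ∀ m, m < d → (es m).2 - (es m).1 ≠ 0 := fun m hm => dir_ne (hmemD m hm)
  set θm : ℕ → ℝ := fun m => Γ.θ (ue (es m)) with hθm
  have hθpos : ∀ m, m < d → 0 < θm m := fun m hm => Γ.θpos _ (hmemD m hm)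
  set B : ℕ → ℝ := fun m => (∑ j ∈ Finset.range m, θm j) - θm 0 / 2 with hB
  have hBsucc : ∀ m, B (m + 1) = B m + θm m := by
    intro m
    simp only [hB, Finset.sum_range_succ]
    ring
  have hsum : ∑ j ∈ Finset.range d, θm j = Real.pi := by
    have hbij : ∑ j ∈ Finset.range d, θm j = ∑ x ∈ inF Γ e₀.2, Γ.θ (ue x) := by
      apply Finset.sum_bij (fun (j : ℕ) (_ : j ∈ Finset.range d) => es j)
      · intro a ha; exact hmem a (Finset.mem_range.mp ha)
      · intro a ha b hb hab
        exact hinj a b (Finset.mem_range.mp ha) (Finset.mem_range.mp hb) hab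
      · intro x hx
        obtain ⟨m, hm, hmx⟩ := hsurj x hx
        exact ⟨m, Finset.mem_range.mpr hm, hmx⟩
      · intro a ha; rfl
    rw [hbij]
    exact thetaSum_in ⟨e₀, mem_inF.mpr ⟨h0, rfl⟩⟩
  have hBd : B d = Real.pi - θm 0 / 2 := by
    simp only [hB]
    rw [hsum]
  have hB1 : B 1 = θm 0 / 2 := by
    simp only [hB, Finset.sum_range_one]
    ring
  -- telescoped angles (P-induction)
  have hP : ∀ m, m < d → ∀ g, g ∈ Γ.D → g.1 = e₀.2 → (∀ j, j ≤ m → g ≠ rev (es j)) →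
      ang e₀ g = (∑ j ∈ Finset.range m, (θm j + θm (j + 1))) + ang (es m) g := by
    intro m
    induction m with
    | zero =>
      intro _ g _ _ _
      rw [hes0]
      simp
    | succ n ih =>
      intro hm g hgD hgz havoid
      have hn : n < d := by omega
      have hcons := hconsec n hm
      have h1 := ih hn g hgD hgz (fun j hj => havoid j (by omega))
      have h2 := Γ.angAdd e₀.2 (es n) (es (n + 1)) g hcons hgD hgz
        (havoid n (by omega)) (havoid (n + 1) (le_refl _))
      have h3 := Γ.consecAngle e₀.2 (es n) (es (n + 1)) hcons
      rw [Finset.sum_range_succ, h1, ← h2, h3]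
      ring
  -- exact angle of reversed edges
  have hr : ∀ n, n + 1 < d →
      ang e₀ (rev (es (n + 1))) = B (n + 1) + B (n + 2) - Real.pi := by
    intro n h
    have hgD : rev (es (n + 1)) ∈ Γ.D := Γ.symm _ (hmemD _ h)
    have hgz : (rev (es (n + 1))).1 = e₀.2 := hmemz _ h
    have havoid : ∀ j, j ≤ n → rev (es (n + 1)) ≠ rev (es j) := by
      intro j hj hh
      have := hinj (n + 1) j h (by omega) (rev_inj hh)
      omega
    have h1 := hP n (by omega) _ hgD hgz havoid
    have hcons := hconsec n h
    have h3 := Γ.consecAngle e₀.2 (es n) (es (n + 1)) hcons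
    have hpos : 0 < ang (es n) (es (n + 1)) := by
      rw [h3]
      have := hθpos n (by omega)
      have := hθpos (n + 1) h
      linarith
    have h4 := ang_rev_right (hdir n (by omega)) (hdir (n + 1) h) hpos
    rw [h3] at h4
    rw [h1, h4, Finset.sum_add_distrib]
    have e1 := Finset.sum_range_succ' θm n
    have e3 := Finset.sum_range_succ θm n
    have e4 := Finset.sum_range_succ θm (n + 1)
    simp only [hB]
    linarith
  -- conjugate unit vectors
  have hw : ∀ n, n + 1 < d →
      (starRingEnd ℂ) (uv (rev (es (n + 1))))
        = (starRingEnd ℂ) (uv e₀)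
          * Complex.exp (((-(B (n + 1) + B (n + 2) - Real.pi) : ℝ) : ℂ) * Complex.I) := by
    intro n h
    have hgD : rev (es (n + 1)) ∈ Γ.D := Γ.symm _ (hmemD _ h)
    have hdg : (rev (es (n + 1))).2 - (rev (es (n + 1))).1 ≠ 0 := dir_ne hgD
    have hexp := exp_ang hde0 hdg
    rw [hr n h] at hexp
    have h0' : uv e₀ ≠ 0 := uv_ne_zero hde0
    rw [eq_div_iff h0'] at hexp
    have huv : uv (rev (es (n + 1))) = uv e₀
        * Complex.exp (((B (n + 1) + B (n + 2) - Real.pi : ℝ) : ℂ) * Complex.I) := by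
      rw [← hexp]; ring
    rw [huv, map_mul, conj_exp_real]
  -- closed form of S1 at reversed edges
  have hSone : ∀ n, n + 1 < d →
      Sproj Γ (fun _ => 1) (rev (es (n + 1)))
        = ((Real.sin ((B (n + 2) - B (n + 1)) / 2) : ℝ) : ℂ)
          * (1 + (starRingEnd ℂ) (uv e₀)
            * Complex.exp (((-(B (n + 1) + B (n + 2) - Real.pi) : ℝ) : ℂ) * Complex.I)) / 2 := by
    intro n h
    have hgD : rev (es (n + 1)) ∈ Γ.D := Γ.symm _ (hmemD _ h)
    have hclosed := Sproj_closed (Γ := Γ) (f := fun _ => (1 : ℂ))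
      (e := rev (es (n + 1))) (c := 1) (by norm_num) (dir_ne hgD)
    rw [hclosed, hw n h]
    have hth : Γ.θ (ue (rev (es (n + 1)))) = B (n + 2) - B (n + 1) := by
      rw [ue_rev]
      have := hBsucc (n + 1)
      simp only [hθm] at this ⊢
      linarith
    rw [hth]
    push_cast
    ring
  -- main computation
  unfold KWop
  rw [if_pos h0]
  have hstep1 : ∑ g ∈ (Γ.finOut e₀.2).toFinset,
        (if g ≠ rev e₀ then ((critX Γ (ue e₀) : ℝ) : ℂ)
          * Complex.exp (Complex.I * ((ang e₀ g : ℝ) : ℂ) / 2) * Sproj Γ (fun _ => 1) g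
        else 0)
      = ∑ m ∈ Finset.range d,
        (if rev (es m) ≠ rev e₀ then ((critX Γ (ue e₀) : ℝ) : ℂ)
          * Complex.exp (Complex.I * ((ang e₀ (rev (es m)) : ℝ) : ℂ) / 2)
          * Sproj Γ (fun _ => 1) (rev (es m))
        else 0) := by
    rw [show (Γ.finOut e₀.2).toFinset = outF Γ e₀.2 from rfl, sum_inF]
    refine (Finset.sum_bij (fun (j : ℕ) (_ : j ∈ Finset.range d) => es j) ?_ ?_ ?_ ?_).symm
    · intro a ha; exact hmem a (Finset.mem_range.mp ha)
    · intro a ha b hb hab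
      exact hinj a b (Finset.mem_range.mp ha) (Finset.mem_range.mp hb) hab
    · intro x hx
      obtain ⟨m, hm, hmx⟩ := hsurj x hx
      exact ⟨m, Finset.mem_range.mpr hm, hmx⟩
    · intro a ha; rfl
  rw [hstep1]
  rw [show d = (d - 1) + 1 by omega, Finset.sum_range_succ']
  rw [show rev (es 0) = rev e₀ from by rw [hes0]]
  rw [if_neg (by simp)]
  have hterm : ∀ i ∈ Finset.range (d - 1),
      (if rev (es (i + 1)) ≠ rev e₀ then ((critX Γ (ue e₀) : ℝ) : ℂ)
          * Complex.exp (Complex.I * ((ang e₀ (rev (es (i + 1))) : ℝ) : ℂ) / 2)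
          * Sproj Γ (fun _ => 1) (rev (es (i + 1)))
        else 0)
      = ((critX Γ (ue e₀) : ℝ) : ℂ) / 4
        * ((Complex.exp (((B (i + 1) : ℝ) : ℂ) * Complex.I)
            - Complex.exp (((B (i + 2) : ℝ) : ℂ) * Complex.I))
          + (starRingEnd ℂ) (uv e₀)
            * (Complex.exp (((-B (i + 1) : ℝ) : ℂ) * Complex.I)
              - Complex.exp (((-B (i + 2) : ℝ) : ℂ) * Complex.I))) := by
    intro i hi
    have hi1 : i + 1 < d := by
      have := Finset.mem_range.mp hi
      omega
    have hne : rev (es (i + 1)) ≠ rev e₀ := by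
      intro hh
      have h1 : es (i + 1) = es 0 := by
        rw [hes0]
        exact rev_inj hh
      have := hinj (i + 1) 0 hi1 (by omega) h1
      omega
    rw [if_pos hne, hr i hi1, hSone i hi1]
    exact tele_term (B (i + 1)) (B (i + 2)) ((starRingEnd ℂ) (uv e₀))
      ((critX Γ (ue e₀) : ℝ) : ℂ)
  rw [Finset.sum_congr rfl hterm]
  -- telescoping
  have htel : ∑ i ∈ Finset.range (d - 1),
      (((critX Γ (ue e₀) : ℝ) : ℂ) / 4
        * ((Complex.exp (((B (i + 1) : ℝ) : ℂ) * Complex.I)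
            - Complex.exp (((B (i + 2) : ℝ) : ℂ) * Complex.I))
          + (starRingEnd ℂ) (uv e₀)
            * (Complex.exp (((-B (i + 1) : ℝ) : ℂ) * Complex.I)
              - Complex.exp (((-B (i + 2) : ℝ) : ℂ) * Complex.I))))
      = (fun m => ((critX Γ (ue e₀) : ℝ) : ℂ) / 4
          * (Complex.exp (((B (m + 1) : ℝ) : ℂ) * Complex.I)
            + (starRingEnd ℂ) (uv e₀)
              * Complex.exp (((-B (m + 1) : ℝ) : ℂ) * Complex.I))) 0
        - (fun m => ((critX Γ (ue e₀) : ℝ) : ℂ) / 4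
          * (Complex.exp (((B (m + 1) : ℝ) : ℂ) * Complex.I)
            + (starRingEnd ℂ) (uv e₀)
              * Complex.exp (((-B (m + 1) : ℝ) : ℂ) * Complex.I))) (d - 1) := by
    rw [← Finset.sum_range_sub' (fun m => ((critX Γ (ue e₀) : ℝ) : ℂ) / 4
      * (Complex.exp (((B (m + 1) : ℝ) : ℂ) * Complex.I)
        + (starRingEnd ℂ) (uv e₀)
          * Complex.exp (((-B (m + 1) : ℝ) : ℂ) * Complex.I))) (d - 1)]
    apply Finset.sum_congr rfl
    intro i _
    ring
  rw [htel]
  simp only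
  rw [show (d - 1) + 1 = d by omega]
  -- end values
  have hτ : θm 0 = Γ.θ (ue e₀) := by simp only [hθm, hes0]
  have hθpos0 := hθpos 0 (by omega)
  have hθlt0 : θm 0 < Real.pi := by
    simp only [hθm]
    exact Γ.θlt _ (hmemD 0 (by omega))
  have hEd : Complex.exp (((B d : ℝ) : ℂ) * Complex.I)
      = - Complex.exp (((-(θm 0 / 2) : ℝ) : ℂ) * Complex.I) := by
    rw [hBd]
    have : Complex.exp (((Real.pi - θm 0 / 2 : ℝ) : ℂ) * Complex.I)
        = Complex.exp ((Real.pi : ℂ) * Complex.I)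
          * Complex.exp (((-(θm 0 / 2) : ℝ) : ℂ) * Complex.I) := by
      rw [← Complex.exp_add]
      congr 1
      push_cast
      ring
    rw [this, Complex.exp_pi_mul_I]
    ring
  have hEd' : Complex.exp (((-B d : ℝ) : ℂ) * Complex.I)
      = - Complex.exp (((θm 0 / 2 : ℝ) : ℂ) * Complex.I) := by
    rw [hBd]
    have : Complex.exp (((-(Real.pi - θm 0 / 2) : ℝ) : ℂ) * Complex.I)
        = Complex.exp ((Real.pi : ℂ) * Complex.I)
          * Complex.exp (((θm 0 / 2 : ℝ) : ℂ) * Complex.I)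
          * (Complex.exp ((Real.pi : ℂ) * Complex.I)
            * Complex.exp ((Real.pi : ℂ) * Complex.I))⁻¹ := by
      rw [← Complex.exp_add, ← Complex.exp_add, ← Complex.exp_neg, ← Complex.exp_add]
      congr 1
      push_cast
      ring
    rw [this, Complex.exp_pi_mul_I]
    norm_num
  rw [hB1, hEd, hEd']
  -- final algebra
  have hSe0 := Sproj_closed (Γ := Γ) (f := fun _ => (1 : ℂ)) (e := e₀) (c := 1)
    (by norm_num) hde0
  rw [hSe0]
  rw [show critX Γ (ue e₀) = Real.tan (Γ.θ (ue e₀) / 2) from rfl, ← hτ]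
  have hcost : Real.tan (θm 0 / 2) * Real.cos (θm 0 / 2) = Real.sin (θm 0 / 2) := by
    have hcpos : 0 < Real.cos (θm 0 / 2) := by
      apply Real.cos_pos_of_mem_Ioo
      constructor
      · linarith [Real.pi_pos]
      · linarith
    rw [Real.tan_eq_sin_div_cos]
    field_simp
  have hcostC : ((Real.tan (θm 0 / 2) : ℝ) : ℂ) * ((Real.cos (θm 0 / 2) : ℝ) : ℂ)
      = ((Real.sin (θm 0 / 2) : ℝ) : ℂ) := by
    exact_mod_cast congrArg (fun r : ℝ => (r : ℂ)) hcost
  have hcc := exp_add_exp_neg (θm 0 / 2)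
  rw [show Real.sin (θm 0 / 2) * 1 = Real.sin (θm 0 / 2) by ring]
  linear_combination (-(((Real.tan (θm 0 / 2) : ℝ) : ℂ)
      * (1 + (starRingEnd ℂ) (uv e₀))) / 4) * hcc
    + (-(1 + (starRingEnd ℂ) (uv e₀)) / 2) * hcostC

-- S5: operator linearity, locality, supports

lemma KWop_congr {Γ : Isoradial} {x : Sym2 ℂ → ℝ} {φ ψ : (ℂ × ℂ) → ℂ} {e : ℂ × ℂ}
    (h1 : φ e = ψ e) (h2 : ∀ g ∈ outF Γ e.2, φ g = ψ g) :
    KWop Γ x φ e = KWop Γ x ψ e := by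
  unfold KWop
  rw [h1]
  congr 1
  split
  · apply Finset.sum_congr rfl
    intro g hg
    rw [h2 g hg]
  · rfl

lemma KWop_add {Γ : Isoradial} {x : Sym2 ℂ → ℝ} (φ ψ : (ℂ × ℂ) → ℂ) (e : ℂ × ℂ) :
    KWop Γ x (fun y => φ y + ψ y) e = KWop Γ x φ e + KWop Γ x ψ e := by
  unfold KWop
  split
  · have hs : ∑ g ∈ (Γ.finOut e.2).toFinset,
        (if g ≠ rev e then ((x (ue e) : ℝ) : ℂ)
          * Complex.exp (Complex.I * ((ang e g : ℝ) : ℂ) / 2) * (φ g + ψ g) else 0)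
        = (∑ g ∈ (Γ.finOut e.2).toFinset,
            (if g ≠ rev e then ((x (ue e) : ℝ) : ℂ)
              * Complex.exp (Complex.I * ((ang e g : ℝ) : ℂ) / 2) * φ g else 0))
          + (∑ g ∈ (Γ.finOut e.2).toFinset,
            (if g ≠ rev e then ((x (ue e) : ℝ) : ℂ)
              * Complex.exp (Complex.I * ((ang e g : ℝ) : ℂ) / 2) * ψ g else 0)) := by
      rw [← Finset.sum_add_distrib]
      apply Finset.sum_congr rfl
      intro g _
      split <;> ring
    rw [hs]
    ring
  · ring

lemma KWop_zero {Γ : Isoradial} {x : Sym2 ℂ → ℝ} (e : ℂ × ℂ) :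
    KWop Γ x (fun _ => 0) e = 0 := by
  unfold KWop
  split <;> simp

lemma Sproj_add {Γ : Isoradial} (f g : Sym2 ℂ → ℂ) (e : ℂ × ℂ) :
    Sproj Γ (fun t => f t + g t) e = Sproj Γ f e + Sproj Γ g e := by
  unfold Sproj projL
  simp only [add_mul, Complex.add_re]
  push_cast
  ring

lemma Sproj_zero {Γ : Isoradial} {f : Sym2 ℂ → ℂ} {e : ℂ × ℂ}
    (h : f (ue e) = 0) : Sproj Γ f e = 0 := by
  unfold Sproj projL
  rw [h]
  simp

lemma normSq_dirL (e : ℂ × ℂ) : Complex.normSq (dirL e) = 1 := by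
  rw [Complex.normSq_eq_abs, dirL_eq, Complex.abs_exp]
  simp

lemma normSq_Sproj {Γ : Isoradial} {f : Sym2 ℂ → ℂ} {e : ℂ × ℂ} {c : ℝ}
    (hc : f (ue e) = (c : ℂ)) :
    Complex.normSq (Sproj Γ f e)
      = (Real.sin (Γ.θ (ue e) / 2) * (c * Real.cos (Complex.arg (e.2 - e.1) / 2))) ^ 2 := by
  rw [Sproj_dirL hc, Complex.normSq_mul, normSq_dirL, Complex.normSq_ofReal]
  ring

lemma abs_Sproj_le {Γ : Isoradial} {f : Sym2 ℂ → ℂ} {e : ℂ × ℂ} {c : ℝ}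
    (hc : f (ue e) = (c : ℂ)) (hcle : |c| ≤ 1) (he : e ∈ Γ.D) :
    Complex.abs (Sproj Γ f e) ≤ Real.sin (Γ.θ (ue e) / 2) := by
  have hsin : 0 ≤ Real.sin (Γ.θ (ue e) / 2) := by
    apply Real.sin_nonneg_of_nonneg_of_le_pi
    · linarith [Γ.θpos e he]
    · linarith [Γ.θlt e he, Real.pi_pos]
  rw [Sproj_dirL hc, map_mul]
  have h1 : Complex.abs (dirL e) = 1 := by
    have := normSq_dirL e
    rw [Complex.normSq_eq_abs] at this
    nlinarith [Complex.abs.nonneg (dirL e)]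
  rw [h1, mul_one, Complex.abs_ofReal]
  rw [abs_mul, abs_mul]
  calc |Real.sin (Γ.θ (ue e) / 2)| * (|c| * |Real.cos (Complex.arg (e.2 - e.1) / 2)|)
      ≤ |Real.sin (Γ.θ (ue e) / 2)| * (1 * 1) := by
        apply mul_le_mul_of_nonneg_left _ (abs_nonneg _)
        apply mul_le_mul hcle (Real.abs_cos_le_one _) (abs_nonneg _) zero_le_one
    _ = Real.sin (Γ.θ (ue e) / 2) := by
        rw [_root_.abs_of_nonneg hsin]; ring

lemma ue_cases {a b : ℂ × ℂ} (h : ue a = ue b) : a = b ∨ a = rev b := by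
  unfold ue at h
  rcases Sym2.eq_iff.mp h with ⟨h1, h2⟩ | ⟨h1, h2⟩
  · left; exact Prod.ext h1 h2
  · right; exact Prod.ext h1 h2

lemma rev_ne_self {Γ : Isoradial} {a : ℂ × ℂ} (ha : a ∈ Γ.D) : a ≠ rev a := by
  intro h
  have := Γ.nd a ha
  rw [rev] at h
  exact this (congrArg Prod.fst h)

-- picking a directed representative of an undirected edge
lemma pick_exists (Γ : Isoradial) (t : Sym2 ℂ) :
    ∃ p : ℂ × ℂ, ((∃ e ∈ Γ.D, ue e = t) → p ∈ Γ.D ∧ ue p = t) := by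
  by_cases h : ∃ e ∈ Γ.D, ue e = t
  · obtain ⟨e, he, hue⟩ := h
    exact ⟨e, fun _ => ⟨he, hue⟩⟩
  · exact ⟨(0, 1), fun hh => absurd hh h⟩

noncomputable def pick (Γ : Isoradial) (t : Sym2 ℂ) : ℂ × ℂ := (pick_exists Γ t).choose

lemma pick_spec {Γ : Isoradial} {t : Sym2 ℂ} (h : ∃ e ∈ Γ.D, ue e = t) :
    pick Γ t ∈ Γ.D ∧ ue (pick Γ t) = t := (pick_exists Γ t).choose_spec h

noncomputable def dirEdges (Γ : Isoradial) (H : Finset (Sym2 ℂ)) : Finset (ℂ × ℂ) :=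
  H.biUnion (fun t => {pick Γ t, rev (pick Γ t)})

lemma mem_dirEdges_of {Γ : Isoradial} {H : Finset (Sym2 ℂ)} {e : ℂ × ℂ}
    (he : e ∈ Γ.D) (hue : ue e ∈ H) : e ∈ dirEdges Γ H := by
  have hspec := pick_spec (Γ := Γ) (t := ue e) ⟨e, he, rfl⟩
  apply Finset.mem_biUnion.mpr
  refine ⟨ue e, hue, ?_⟩
  simp only [Finset.mem_insert, Finset.mem_singleton]
  exact ue_cases (a := e) (b := pick Γ (ue e)) (by rw [hspec.2])

lemma ue_mem_of_mem_dirEdges {Γ : Isoradial} {H : Finset (Sym2 ℂ)}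
    (hH : ∀ t ∈ H, ∃ e ∈ Γ.D, ue e = t) {e : ℂ × ℂ} (he : e ∈ dirEdges Γ H) :
    e ∈ Γ.D ∧ ue e ∈ H := by
  obtain ⟨t, ht, hmem⟩ := Finset.mem_biUnion.mp he
  have hspec := pick_spec (hH t ht)
  simp only [Finset.mem_insert, Finset.mem_singleton] at hmem
  rcases hmem with rfl | rfl
  · exact ⟨hspec.1, by rw [hspec.2]; exact ht⟩
  · exact ⟨Γ.symm _ hspec.1, by rw [ue_rev, hspec.2]; exact ht⟩

lemma Sproj_indH_support {Γ : Isoradial} {H : Finset (Sym2 ℂ)} {e : ℂ × ℂ}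
    (he : e ∈ Γ.D) (hnot : e ∉ dirEdges Γ H) : Sproj Γ (indH H) e = 0 := by
  apply Sproj_zero
  unfold indH
  rw [if_neg]
  intro hmem
  exact hnot (mem_dirEdges_of he hmem)

-- l2sq via finite sums
lemma l2sq_eq_sum (Γ : Isoradial) (φ : (ℂ × ℂ) → ℂ) (F : Finset (ℂ × ℂ))
    (h : ∀ e ∈ Γ.D, e ∉ F → φ e = 0) :
    l2sq Γ φ = ∑ e ∈ F.filter (· ∈ Γ.D), Complex.normSq (φ e) := by
  classical
  unfold l2sq
  have key : ∑' (e : ↥Γ.D), Complex.normSq (φ (e : ℂ × ℂ))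
      = ∑ e ∈ Finset.subtype (fun x => x ∈ Γ.D) F, Complex.normSq (φ ((e : ℂ × ℂ))) := by
    apply tsum_eq_sum
    intro b hb
    have hbF : (b : ℂ × ℂ) ∉ F := by
      intro hh
      exact hb (Finset.mem_subtype.mpr hh)
    rw [h b b.2 hbF]
    simp
  rw [key]
  exact Finset.sum_subtype_eq_sum_filter (fun e => Complex.normSq (φ e))

lemma l2sq_nonneg (Γ : Isoradial) (φ : (ℂ × ℂ) → ℂ) : 0 ≤ l2sq Γ φ :=
  tsum_nonneg (fun _ => Complex.normSq_nonneg _)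

-- the cosine-squared identity for reversed edges
lemma cos_half_arg_sq (x : ℂ) (hx : x ≠ 0) :
    Real.cos (Complex.arg (-x) / 2) ^ 2 + Real.cos (Complex.arg x / 2) ^ 2 = 1 := by
  have hangle := Complex.arg_neg_coe_angle hx
  have : ((Complex.arg (-x) : ℝ) : Real.Angle) = ((Complex.arg x + Real.pi : ℝ) : Real.Angle) := by
    rw [hangle, Real.Angle.coe_add]
  obtain ⟨n, hn⟩ := Real.Angle.angle_eq_iff_two_pi_dvd_sub.mp this
  have hc1 : Real.cos (Complex.arg (-x)) = - Real.cos (Complex.arg x) := by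
    have hrw : Complex.arg (-x) = (Complex.arg x + Real.pi) + n * (2 * Real.pi) := by
      linarith [hn]
    rw [hrw, Real.cos_add_int_mul_two_pi, Real.cos_add, Real.cos_pi, Real.sin_pi]
    ring
  have h1 := Real.cos_sq (Complex.arg (-x) / 2)
  have h2 := Real.cos_sq (Complex.arg x / 2)
  rw [show 2 * (Complex.arg (-x) / 2) = Complex.arg (-x) by ring] at h1
  rw [show 2 * (Complex.arg x / 2) = Complex.arg x by ring] at h2
  rw [h1, h2, hc1]
  ring

-- S6: vanishing at non-boundary vertices and entry bounds

lemma KW_zero_of_no_H {Γ : Isoradial} {H : Finset (Sym2 ℂ)} {e : ℂ × ℂ} (he : e ∈ Γ.D)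
    (hnone : ∀ g ∈ Γ.D, g.2 = e.2 → ue g ∉ H) :
    KWop Γ (critX Γ) (Sproj Γ (indH H)) e = 0 := by
  unfold KWop
  rw [if_pos he]
  have h1 : Sproj Γ (indH H) e = 0 := by
    apply Sproj_zero
    unfold indH
    rw [if_neg (hnone e he rfl)]
  rw [h1, Finset.sum_eq_zero, sub_zero]
  intro g hg
  obtain ⟨hgD, hg1⟩ := mem_outF.mp hg
  have hgo : ue g ∉ H := by
    intro hmem
    exact hnone (rev g) (Γ.symm g hgD) hg1 (by rwa [ue_rev])
  have h2 : Sproj Γ (indH H) g = 0 := by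
    apply Sproj_zero
    unfold indH
    rw [if_neg hgo]
  rw [h2]
  split <;> ring

lemma KW_zero_of_not_bdry {Γ : Isoradial} {H : Finset (Sym2 ℂ)} {e : ℂ × ℂ}
    (he : e ∈ Γ.D) (hb : ¬ BdryVtx Γ H e.2) :
    KWop Γ (critX Γ) (Sproj Γ (indH H)) e = 0 := by
  unfold BdryVtx at hb
  by_cases hA : ∃ g ∈ Γ.D, g.2 = e.2 ∧ ue g ∈ H
  · have hall : ∀ g ∈ Γ.D, g.2 = e.2 → ue g ∈ H := by
      intro g hgD hgz
      by_contra hmem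
      exact hb ⟨hA, ⟨g, hgD, hgz, hmem⟩⟩
    have hig : ∀ g ∈ outF Γ e.2, Sproj Γ (indH H) g = Sproj Γ (fun _ => 1) g := by
      intro g hg
      obtain ⟨hgD, hg1⟩ := mem_outF.mp hg
      have hmm : ue g ∈ H := by
        have := hall (rev g) (Γ.symm g hgD) hg1
        rwa [ue_rev] at this
      unfold Sproj
      rw [show indH H (ue g) = 1 from if_pos hmm]
    have h1 : Sproj Γ (indH H) e = Sproj Γ (fun _ => 1) e := by
      unfold Sproj
      rw [show indH H (ue e) = 1 from if_pos (hall e he rfl)]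
    rw [KWop_congr h1 hig]
    exact KW_Sone Γ he
  · apply KW_zero_of_no_H he
    intro g hgD hgz hmem
    exact hA ⟨g, hgD, hgz, hmem⟩

set_option maxHeartbeats 1000000 in
lemma entry_bound {Γ : Isoradial} {k K Δ : ℝ} (hk : 0 < k) (hK : K < Real.pi)
    (hθ : ∀ e ∈ Γ.D, k ≤ Γ.θ (ue e) ∧ Γ.θ (ue e) ≤ K)
    (hΔ : ∀ z : ℂ, ((Γ.finOut z).toFinset.card : ℝ) ≤ Δ)
    {H : Finset (Sym2 ℂ)} {e : ℂ × ℂ} (he : e ∈ Γ.D) :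
    Complex.normSq (KWop Γ (critX Γ) (Sproj Γ (indH H)) e)
      ≤ Real.tan (K / 2) ^ 2 * Δ ^ 2 / 2 := by
  classical
  have hθe := hθ e he
  have hθepos := Γ.θpos e he
  have hθelt := Γ.θlt e he
  have hKpos : 0 < K := lt_of_lt_of_le hk (le_trans hθe.1 hθe.2)
  have htanKpos : 0 < Real.tan (K / 2) :=
    Real.tan_pos_of_pos_of_lt_pi_div_two (by linarith) (by linarith)
  -- decompose
  set c₀ : ℝ := if ue e ∈ H then (1 : ℝ) else 0 with hc₀
  set f' : Sym2 ℂ → ℂ := fun t => indH H t - (c₀ : ℂ) with hf'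
  have hdecomp : Sproj Γ (indH H) = fun y => Sproj Γ f' y + Sproj Γ (fun _ => (c₀ : ℂ)) y := by
    funext y
    rw [← Sproj_add]
    congr 1
    funext t
    simp [hf']
  have hsecond : KWop Γ (critX Γ) (fun y => Sproj Γ (fun _ => (c₀ : ℂ)) y) e = 0 := by
    by_cases hmem : ue e ∈ H
    · have hco : c₀ = 1 := by simp [hc₀, hmem]
      rw [hco]
      have : (fun y => Sproj Γ (fun _ => (((1 : ℝ) : ℂ))) y) = Sproj Γ (fun _ => (1 : ℂ)) := by
        funext y
        norm_num
      rw [this]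
      exact KW_Sone Γ he
    · have hco : c₀ = 0 := by simp [hc₀, hmem]
      rw [hco]
      have : (fun y => Sproj Γ (fun _ => (((0 : ℝ) : ℂ))) y) = (fun _ => (0 : ℂ)) := by
        funext y
        apply Sproj_zero
        norm_num
      rw [this]
      exact KWop_zero e
  have hmain : KWop Γ (critX Γ) (Sproj Γ (indH H)) e = KWop Γ (critX Γ) (Sproj Γ f') e := by
    rw [hdecomp, KWop_add, hsecond, add_zero]
  rw [hmain]
  have hψe : Sproj Γ f' e = 0 := by
    apply Sproj_zero
    simp only [hf', indH, hc₀]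
    split <;> simp
  unfold KWop
  rw [if_pos he, hψe, zero_sub, Complex.normSq_neg,
    show (Γ.finOut e.2).toFinset = outF Γ e.2 from rfl]
  -- bound the sum
  have htannn : 0 ≤ Real.tan (Γ.θ (ue e) / 2) :=
    (Real.tan_pos_of_pos_of_lt_pi_div_two (by linarith) (by linarith)).le
  have htanmono : Real.tan (Γ.θ (ue e) / 2) ≤ Real.tan (K / 2) := by
    rcases eq_or_lt_of_le hθe.2 with hh | hh
    · rw [hh]
    · exact le_of_lt (Real.strictMonoOn_tan
        ⟨by linarith [Real.pi_pos], by linarith⟩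
        ⟨by linarith [Real.pi_pos], by linarith⟩ (by linarith))
  have hbound : ∀ g ∈ outF Γ e.2,
      Complex.abs (if g ≠ rev e then ((critX Γ (ue e) : ℝ) : ℂ)
          * Complex.exp (Complex.I * ((ang e g : ℝ) : ℂ) / 2) * Sproj Γ f' g else 0)
        ≤ (if g = rev e then 0 else Real.tan (K / 2) * Real.sin (Γ.θ (ue g) / 2)) := by
    intro g hg
    obtain ⟨hgD, _⟩ := mem_outF.mp hg
    by_cases hge : g = rev e
    · simp [hge]
    · rw [if_pos hge, if_neg hge, map_mul, map_mul]
      have he1 : Complex.abs (((critX Γ (ue e) : ℝ) : ℂ)) = Real.tan (Γ.θ (ue e) / 2) := by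
        rw [show critX Γ (ue e) = Real.tan (Γ.θ (ue e) / 2) from rfl, Complex.abs_ofReal,
          _root_.abs_of_nonneg htannn]
      have he2 : Complex.abs (Complex.exp (Complex.I * ((ang e g : ℝ) : ℂ) / 2)) = 1 := by
        rw [show Complex.I * ((ang e g : ℝ) : ℂ) / 2
            = ((ang e g / 2 : ℝ) : ℂ) * Complex.I from by push_cast; ring, Complex.abs_exp]
        simp
      have hcval : f' (ue g) = (((if ue g ∈ H then (1 : ℝ) else 0) - c₀ : ℝ) : ℂ) := by
        simp only [hf', indH]
        push_cast
        split <;> simp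
      have hcabs : |(if ue g ∈ H then (1 : ℝ) else 0) - c₀| ≤ 1 := by
        rw [hc₀]
        split <;> split <;> norm_num
      have he3 := abs_Sproj_le hcval hcabs hgD
      rw [he1, he2, mul_one]
      exact mul_le_mul htanmono he3 (Complex.abs.nonneg _) (le_of_lt htanKpos)
  have habs1 : Complex.abs (∑ g ∈ outF Γ e.2,
      (if g ≠ rev e then ((critX Γ (ue e) : ℝ) : ℂ)
        * Complex.exp (Complex.I * ((ang e g : ℝ) : ℂ) / 2) * Sproj Γ f' g else 0))
      ≤ ∑ g ∈ outF Γ e.2, (if g = rev e then 0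
          else Real.tan (K / 2) * Real.sin (Γ.θ (ue g) / 2)) := by
    calc Complex.abs (∑ g ∈ outF Γ e.2,
        (if g ≠ rev e then ((critX Γ (ue e) : ℝ) : ℂ)
          * Complex.exp (Complex.I * ((ang e g : ℝ) : ℂ) / 2) * Sproj Γ f' g else 0))
        = ‖∑ g ∈ outF Γ e.2,
          (if g ≠ rev e then ((critX Γ (ue e) : ℝ) : ℂ)
            * Complex.exp (Complex.I * ((ang e g : ℝ) : ℂ) / 2) * Sproj Γ f' g else 0)‖ := rfl
      _ ≤ ∑ g ∈ outF Γ e.2, ‖(if g ≠ rev e then ((critX Γ (ue e) : ℝ) : ℂ)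
            * Complex.exp (Complex.I * ((ang e g : ℝ) : ℂ) / 2) * Sproj Γ f' g else 0)‖ :=
          norm_sum_le _ _
      _ ≤ ∑ g ∈ outF Γ e.2, (if g = rev e then 0
            else Real.tan (K / 2) * Real.sin (Γ.θ (ue g) / 2)) :=
          Finset.sum_le_sum (fun g hg => hbound g hg)
  set SB := (∑ g ∈ (outF Γ e.2).erase (rev e), Real.sin (Γ.θ (ue g) / 2)) with hSB
  have hsum2 : ∑ g ∈ outF Γ e.2, (if g = rev e then 0
      else Real.tan (K / 2) * Real.sin (Γ.θ (ue g) / 2)) = Real.tan (K / 2) * SB := by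
    rw [← Finset.sum_erase (outF Γ e.2) (a := rev e) (f := fun g => if g = rev e then 0
      else Real.tan (K / 2) * Real.sin (Γ.θ (ue g) / 2)) (by simp)]
    rw [hSB, Finset.mul_sum]
    apply Finset.sum_congr rfl
    intro g hg
    rw [if_neg (Finset.ne_of_mem_erase hg)]
  have hrev : rev e ∈ outF Γ e.2 := mem_outF.mpr ⟨Γ.symm e he, rfl⟩
  have hsinnn : ∀ g ∈ outF Γ e.2, 0 ≤ Real.sin (Γ.θ (ue g) / 2) := by
    intro g hg
    have hgD := (mem_outF.mp hg).1
    apply Real.sin_nonneg_of_nonneg_of_le_pi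
    · linarith [Γ.θpos g hgD]
    · linarith [Γ.θlt g hgD, Real.pi_pos]
  have hSBnn : 0 ≤ SB := Finset.sum_nonneg (fun g hg =>
    hsinnn g (Finset.mem_of_mem_erase hg))
  have hSB1 : SB ≤ Real.pi / 2 := by
    have h1 : SB ≤ ∑ g ∈ (outF Γ e.2).erase (rev e), Γ.θ (ue g) / 2 := by
      apply Finset.sum_le_sum
      intro g hg
      have hgD := (mem_outF.mp (Finset.mem_of_mem_erase hg)).1
      exact Real.sin_le (by linarith [Γ.θpos g hgD])
    have h2 : ∑ g ∈ (outF Γ e.2).erase (rev e), Γ.θ (ue g) / 2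
        ≤ ∑ g ∈ outF Γ e.2, Γ.θ (ue g) / 2 := by
      apply Finset.sum_le_sum_of_subset_of_nonneg (Finset.erase_subset _ _)
      intro g hg _
      have hgD := (mem_outF.mp hg).1
      linarith [Γ.θpos g hgD]
    have h3 : ∑ g ∈ outF Γ e.2, Γ.θ (ue g) / 2 = Real.pi / 2 := by
      rw [← Finset.sum_div, thetaSum ⟨rev e, hrev⟩]
    linarith
  have hΔz := hΔ e.2
  have hcard2 : 2 ≤ (outF Γ e.2).card := two_le_card_outF (Γ.symm e he) rfl
  have hΔ2 : (2 : ℝ) ≤ Δ := le_trans (by exact_mod_cast hcard2) hΔz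
  -- combine
  have habs : Complex.abs (∑ g ∈ outF Γ e.2,
      (if g ≠ rev e then ((critX Γ (ue e) : ℝ) : ℂ)
        * Complex.exp (Complex.I * ((ang e g : ℝ) : ℂ) / 2) * Sproj Γ f' g else 0))
      ≤ Real.tan (K / 2) * SB := by
    rw [← hsum2]
    exact habs1
  have hSBsq : SB ^ 2 ≤ Δ ^ 2 / 2 := by
    by_cases hcase : Real.pi ^ 2 / 2 ≤ Δ ^ 2
    · have := pow_le_pow_left₀ hSBnn hSB1 2
      nlinarith [Real.pi_pos]
    · push_neg at hcase
      have hpi : Real.pi < 3.15 := Real.pi_lt_d2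
      have hΔnn : (0 : ℝ) ≤ Δ := le_trans (Nat.cast_nonneg _) (hΔ e.2)
      have hpisq : Real.pi ^ 2 < 10 := by nlinarith [Real.pi_pos]
      have hΔlt : Δ < 3 := by nlinarith [hΔnn, sq_nonneg Δ]
      have hcardle : (outF Γ e.2).card ≤ 2 := by
        by_contra hcc
        push_neg at hcc
        have h3c : (3 : ℝ) ≤ ((outF Γ e.2).card : ℝ) := by exact_mod_cast hcc
        have hΔz' : ((outF Γ e.2).card : ℝ) ≤ Δ := hΔz
        linarith
      have hSBle1 : SB ≤ 1 := by
        have h1 : SB ≤ ∑ _g ∈ (outF Γ e.2).erase (rev e), (1 : ℝ) := by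
          apply Finset.sum_le_sum
          intro g _
          exact Real.sin_le_one _
        have h2 : ∑ _g ∈ (outF Γ e.2).erase (rev e), (1 : ℝ)
            = (((outF Γ e.2).erase (rev e)).card : ℝ) := by simp
        have h3 : ((outF Γ e.2).erase (rev e)).card = (outF Γ e.2).card - 1 :=
          Finset.card_erase_of_mem hrev
        have h4 : ((outF Γ e.2).erase (rev e)).card ≤ 1 := by omega
        have h5 : (((outF Γ e.2).erase (rev e)).card : ℝ) ≤ 1 := by exact_mod_cast h4
        linarith
      nlinarith
  rw [Complex.normSq_eq_abs]
  calc Complex.abs (∑ g ∈ outF Γ e.2,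
      (if g ≠ rev e then ((critX Γ (ue e) : ℝ) : ℂ)
        * Complex.exp (Complex.I * ((ang e g : ℝ) : ℂ) / 2) * Sproj Γ f' g else 0)) ^ 2
      ≤ (Real.tan (K / 2) * SB) ^ 2 :=
        pow_le_pow_left₀ (Complex.abs.nonneg _) habs 2
    _ ≤ Real.tan (K / 2) ^ 2 * Δ ^ 2 / 2 := by nlinarith [htanKpos.le, sq_nonneg (Real.tan (K/2))]

-- S7: global bounds

lemma l2sq_KW_upper {Γ : Isoradial} {k K Δ : ℝ} (hk : 0 < k) (hK : K < Real.pi)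
    (hθ : ∀ e ∈ Γ.D, k ≤ Γ.θ (ue e) ∧ Γ.θ (ue e) ≤ K)
    (hΔ : ∀ z : ℂ, ((Γ.finOut z).toFinset.card : ℝ) ≤ Δ)
    {H : Finset (Sym2 ℂ)} (hH : ∀ t ∈ H, ∃ e ∈ Γ.D, ue e = t) :
    l2sq Γ (KWop Γ (critX Γ) (Sproj Γ (indH H)))
      ≤ Real.tan (K / 2) ^ 2 * Δ ^ 2 * ((bdryEdges Γ H).ncard : ℝ) := by
  classical
  set VF : Finset ℂ := (dirEdges Γ H).image Prod.snd with hVF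
  have hVFmem : ∀ z : ℂ, (∃ g ∈ Γ.D, g.2 = z ∧ ue g ∈ H) → z ∈ VF := by
    rintro z ⟨g, hgD, hgz, hgH⟩
    exact Finset.mem_image.mpr ⟨g, mem_dirEdges_of hgD hgH, hgz⟩
  set TF : Finset (ℂ × ℂ) := VF.biUnion (fun z => inF Γ z) with hTF
  have hsupp : ∀ e ∈ Γ.D, e ∉ TF → KWop Γ (critX Γ) (Sproj Γ (indH H)) e = 0 := by
    intro e he hnot
    apply KW_zero_of_no_H he
    intro g hgD hgz hgH
    apply hnot
    apply Finset.mem_biUnion.mpr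
    exact ⟨e.2, hVFmem e.2 ⟨g, hgD, hgz, hgH⟩, mem_inF.mpr ⟨he, rfl⟩⟩
  rw [l2sq_eq_sum Γ _ TF hsupp]
  have hrestrict : ∑ e ∈ (TF.filter (· ∈ Γ.D)).filter (fun e => BdryVtx Γ H e.2),
        Complex.normSq (KWop Γ (critX Γ) (Sproj Γ (indH H)) e)
      = ∑ e ∈ TF.filter (· ∈ Γ.D),
        Complex.normSq (KWop Γ (critX Γ) (Sproj Γ (indH H)) e) := by
    apply Finset.sum_filter_of_ne
    intro x hx hne
    by_contra hnb
    rw [KW_zero_of_not_bdry (Finset.mem_filter.mp hx).2 hnb] at hne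
    simp at hne
  rw [← hrestrict]
  set G := (TF.filter (· ∈ Γ.D)).filter (fun e => BdryVtx Γ H e.2) with hG
  -- bdryEdges is finite
  have hbd_fin : (bdryEdges Γ H).Finite := by
    apply Set.Finite.subset
      (Finset.finite_toSet ((VF.biUnion (fun z => outF Γ z ∪ inF Γ z)).image ue))
    rintro t ⟨g, hgD, hguet, hside⟩
    apply Finset.mem_coe.mpr
    apply Finset.mem_image.mpr
    refine ⟨g, ?_, hguet⟩
    apply Finset.mem_biUnion.mpr
    rcases hside with hb | hb
    · obtain ⟨⟨g', hg'D, hg'z, hg'H⟩, _⟩ := hb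
      exact ⟨g.1, hVFmem g.1 ⟨g', hg'D, hg'z, hg'H⟩,
        Finset.mem_union_left _ (mem_outF.mpr ⟨hgD, rfl⟩)⟩
    · obtain ⟨⟨g', hg'D, hg'z, hg'H⟩, _⟩ := hb
      exact ⟨g.2, hVFmem g.2 ⟨g', hg'D, hg'z, hg'H⟩,
        Finset.mem_union_right _ (mem_inF.mpr ⟨hgD, rfl⟩)⟩
  have himg_sub : ↑(G.image ue) ⊆ bdryEdges Γ H := by
    intro t ht
    obtain ⟨a, haG, hat⟩ := Finset.mem_image.mp (Finset.mem_coe.mp ht)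
    have haD : a ∈ Γ.D := (Finset.mem_filter.mp (Finset.mem_filter.mp haG).1).2
    have haB : BdryVtx Γ H a.2 := (Finset.mem_filter.mp haG).2
    exact ⟨a, haD, hat, Or.inr haB⟩
  have h1 : (G.image ue).card ≤ (bdryEdges Γ H).ncard := by
    have := Set.ncard_le_ncard himg_sub hbd_fin
    rwa [Set.ncard_coe_finset] at this
  have h2 : G.card ≤ 2 * (G.image ue).card := by
    apply Finset.card_le_mul_card_image
    intro t ht
    obtain ⟨b, hbG, hbt⟩ := Finset.mem_image.mp ht
    have hsub : G.filter (fun a => ue a = t) ⊆ {b, rev b} := by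
      intro a ha
      obtain ⟨haG, hat⟩ := Finset.mem_filter.mp ha
      have huab : ue a = ue b := by rw [hat, hbt]
      rcases ue_cases huab with h | h
      · exact Finset.mem_insert.mpr (Or.inl h)
      · exact Finset.mem_insert.mpr (Or.inr (Finset.mem_singleton.mpr h))
    calc (G.filter (fun a => ue a = t)).card
        ≤ ({b, rev b} : Finset (ℂ × ℂ)).card := Finset.card_le_card hsub
      _ ≤ 2 := by
          apply le_trans (Finset.card_insert_le _ _)
          simp
  have hcardG : (G.card : ℝ) ≤ 2 * ((bdryEdges Γ H).ncard : ℝ) := by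
    have : G.card ≤ 2 * (bdryEdges Γ H).ncard := le_trans h2 (by omega)
    exact_mod_cast this
  have hterm : ∀ e ∈ G, Complex.normSq (KWop Γ (critX Γ) (Sproj Γ (indH H)) e)
      ≤ Real.tan (K / 2) ^ 2 * Δ ^ 2 / 2 := by
    intro e heG
    exact entry_bound hk hK hθ hΔ (Finset.mem_filter.mp (Finset.mem_filter.mp heG).1).2
  have hM : (0 : ℝ) ≤ Real.tan (K / 2) ^ 2 * Δ ^ 2 / 2 := by positivity
  calc ∑ e ∈ G, Complex.normSq (KWop Γ (critX Γ) (Sproj Γ (indH H)) e)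
      ≤ G.card • (Real.tan (K / 2) ^ 2 * Δ ^ 2 / 2) := Finset.sum_le_card_nsmul G _ _ hterm
    _ = (G.card : ℝ) * (Real.tan (K / 2) ^ 2 * Δ ^ 2 / 2) := by
        rw [nsmul_eq_mul]
    _ ≤ (2 * ((bdryEdges Γ H).ncard : ℝ)) * (Real.tan (K / 2) ^ 2 * Δ ^ 2 / 2) :=
        mul_le_mul_of_nonneg_right hcardG hM
    _ = Real.tan (K / 2) ^ 2 * Δ ^ 2 * ((bdryEdges Γ H).ncard : ℝ) := by ring

lemma l2sq_Sproj_lower {Γ : Isoradial} {k K : ℝ} (hk : 0 < k) (hK : K < Real.pi)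
    (hθ : ∀ e ∈ Γ.D, k ≤ Γ.θ (ue e) ∧ Γ.θ (ue e) ≤ K)
    {H : Finset (Sym2 ℂ)} (hH : ∀ t ∈ H, ∃ e ∈ Γ.D, ue e = t) :
    Real.sin (k / 2) ^ 2 * (H.card : ℝ) ≤ l2sq Γ (Sproj Γ (indH H)) := by
  classical
  rw [l2sq_eq_sum Γ _ (dirEdges Γ H) (fun e he hn => Sproj_indH_support he hn)]
  have hfil : (dirEdges Γ H).filter (· ∈ Γ.D) = dirEdges Γ H := by
    apply Finset.filter_true_of_mem
    intro e he
    exact (ue_mem_of_mem_dirEdges hH he).1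
  rw [hfil]
  unfold dirEdges
  rw [Finset.sum_biUnion ?disj]
  case disj =>
    intro a ha b hb hab
    apply Finset.disjoint_left.mpr
    intro x hxa hxb
    have ha' : a ∈ H := Finset.mem_coe.mp ha
    have hb' : b ∈ H := Finset.mem_coe.mp hb
    have h1 : ue x = a := by
      rcases Finset.mem_insert.mp hxa with rfl | h
      · exact (pick_spec (hH a ha')).2
      · rw [Finset.mem_singleton.mp h, ue_rev]
        exact (pick_spec (hH a ha')).2
    have h2 : ue x = b := by
      rcases Finset.mem_insert.mp hxb with rfl | h
      · exact (pick_spec (hH b hb')).2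
      · rw [Finset.mem_singleton.mp h, ue_rev]
        exact (pick_spec (hH b hb')).2
    exact hab (by rw [← h1, h2])
  have hper : ∀ t ∈ H, Real.sin (k / 2) ^ 2
      ≤ ∑ x ∈ ({pick Γ t, rev (pick Γ t)} : Finset (ℂ × ℂ)),
          Complex.normSq (Sproj Γ (indH H) x) := by
    intro t ht
    obtain ⟨hpD, hpue⟩ := pick_spec (hH t ht)
    have hne : pick Γ t ≠ rev (pick Γ t) := rev_ne_self hpD
    rw [Finset.sum_pair hne]
    have hde := dir_ne hpD
    have hc1 : indH H (ue (pick Γ t)) = ((1 : ℝ) : ℂ) := by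
      unfold indH
      rw [hpue, if_pos ht]
      norm_num
    have hc2 : indH H (ue (rev (pick Γ t))) = ((1 : ℝ) : ℂ) := by
      rw [ue_rev]
      exact hc1
    rw [normSq_Sproj hc1, normSq_Sproj hc2]
    have hrw : (rev (pick Γ t)).2 - (rev (pick Γ t)).1
        = -((pick Γ t).2 - (pick Γ t).1) := by
      simp only [rev]
      ring
    rw [ue_rev, hpue, hrw]
    have hcs := cos_half_arg_sq ((pick Γ t).2 - (pick Γ t).1) hde
    have hθt := hθ (pick Γ t) hpD
    rw [hpue] at hθt
    have hsk : 0 < Real.sin (k / 2) := by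
      apply Real.sin_pos_of_pos_of_lt_pi
      · linarith
      · linarith [Real.pi_pos, hθt.1, hθt.2, hK]
    have h1 : Real.sin (k / 2) ≤ Real.sin (Γ.θ t / 2) := by
      rcases eq_or_lt_of_le (show k / 2 ≤ Γ.θ t / 2 by linarith [hθt.1]) with hh | hh
      · rw [hh]
      · apply le_of_lt
        apply Real.strictMonoOn_sin ⟨by linarith, by linarith [hθt.1, hθt.2]⟩
          ⟨by linarith [hθt.1], by linarith [hθt.2]⟩ hh
    have hexp : (Real.sin (Γ.θ t / 2)
          * (1 * Real.cos (Complex.arg ((pick Γ t).2 - (pick Γ t).1) / 2))) ^ 2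
        + (Real.sin (Γ.θ t / 2)
          * (1 * Real.cos (Complex.arg (-((pick Γ t).2 - (pick Γ t).1)) / 2))) ^ 2
        = Real.sin (Γ.θ t / 2) ^ 2 := by
      linear_combination (Real.sin (Γ.θ t / 2) ^ 2) * hcs
    have h2 : Real.sin (k / 2) ^ 2 ≤ Real.sin (Γ.θ t / 2) ^ 2 :=
      pow_le_pow_left₀ hsk.le h1 2
    linarith [hexp, h2]
  calc Real.sin (k / 2) ^ 2 * (H.card : ℝ)
      = H.card • (Real.sin (k / 2) ^ 2) := by rw [nsmul_eq_mul]; ring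
    _ ≤ ∑ t ∈ H, ∑ x ∈ ({pick Γ t, rev (pick Γ t)} : Finset (ℂ × ℂ)),
          Complex.normSq (Sproj Γ (indH H) x) := Finset.card_nsmul_le_sum H _ _ hper

end KW


/- STATEMENT 18: on the full isoradial graph with angle bounds `k ≤ θ_e ≤ K` and maximal
degree `Δ`, for every finite subgraph `H` one has
`‖T(S 1_H)‖ ≤ C √(|H₀|/|H|) ‖S 1_H‖` with `C = tan(K/2)·Δ/sin(k/2)`; consequently, if
there are finite subgraphs with `|H₀|/|H|` arbitrarily small, the critical Kac-Ward
operator admits no bounded inverse on `ℓ²`. -/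
open KW in
/-- on the full isoradial graph with angle bounds `k ≤ θ_e ≤ K` and maximal
degree `Δ`, for every finite subgraph `H` one has
`‖T(S 1_H)‖ ≤ C √(|H₀|/|H|) ‖S 1_H‖` with `C = tan(K/2)·Δ/sin(k/2)`; consequently, if
there are finite subgraphs with `|H₀|/|H|` arbitrarily small, the critical Kac-Ward
operator admits no bounded inverse on `ℓ²`. -/
theorem critical_KW_no_bounded_inverse
    (Γ : Isoradial) (k K Δ : ℝ) (hk : 0 < k) (hK : K < Real.pi)
    (hθ : ∀ e ∈ Γ.D, k ≤ Γ.θ (ue e) ∧ Γ.θ (ue e) ≤ K)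
    (hΔ : ∀ z : ℂ, ((Γ.finOut z).toFinset.card : ℝ) ≤ Δ) :
    (∀ H : Finset (Sym2 ℂ), (∀ t ∈ H, ∃ e ∈ Γ.D, ue e = t) → H.Nonempty →
      Real.sqrt (l2sq Γ (KWop Γ (critX Γ) (Sproj Γ (indH H)))) ≤
        (Real.tan (K / 2) * Δ / Real.sin (k / 2)) *
          Real.sqrt (((bdryEdges Γ H).ncard : ℝ) / (H.card : ℝ)) *
          Real.sqrt (l2sq Γ (Sproj Γ (indH H)))) ∧
    ((∀ δ > (0 : ℝ), ∃ H : Finset (Sym2 ℂ), (∀ t ∈ H, ∃ e ∈ Γ.D, ue e = t) ∧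
        0 < H.card ∧ ((bdryEdges Γ H).ncard : ℝ) < δ * (H.card : ℝ)) →
      ¬ ∃ c > (0 : ℝ), ∀ φ : (ℂ × ℂ) → ℂ,
        c * Real.sqrt (l2sq Γ φ) ≤ Real.sqrt (l2sq Γ (KWop Γ (critX Γ) φ))) := by
  classical
  have main : ∀ H : Finset (Sym2 ℂ), (∀ t ∈ H, ∃ e ∈ Γ.D, ue e = t) → H.Nonempty →
      Real.sqrt (l2sq Γ (KWop Γ (critX Γ) (Sproj Γ (indH H)))) ≤
        (Real.tan (K / 2) * Δ / Real.sin (k / 2)) *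
          Real.sqrt (((bdryEdges Γ H).ncard : ℝ) / (H.card : ℝ)) *
          Real.sqrt (l2sq Γ (Sproj Γ (indH H))) := by
    intro H hH hne
    obtain ⟨t0, ht0⟩ := hne
    obtain ⟨e0, he0, hue0⟩ := hH t0 ht0
    have hθe := hθ e0 he0
    have hkK : k ≤ K := le_trans hθe.1 hθe.2
    have hKpos : 0 < K := lt_of_lt_of_le hk hkK
    have htanK : 0 < Real.tan (K / 2) :=
      Real.tan_pos_of_pos_of_lt_pi_div_two (by linarith) (by linarith)
    have hsk : 0 < Real.sin (k / 2) :=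
      Real.sin_pos_of_pos_of_lt_pi (by linarith) (by linarith [Real.pi_pos])
    have hΔpos : (0 : ℝ) < Δ := by
      have hmem : rev e0 ∈ (Γ.finOut e0.2).toFinset :=
        mem_outF.mpr ⟨Γ.symm e0 he0, rfl⟩
      have hcpos : 0 < ((Γ.finOut e0.2).toFinset.card : ℝ) := by
        exact_mod_cast Finset.card_pos.mpr ⟨rev e0, hmem⟩
      exact lt_of_lt_of_le hcpos (hΔ e0.2)
    set n0 : ℝ := ((bdryEdges Γ H).ncard : ℝ) with hn0
    set nH : ℝ := (H.card : ℝ) with hnHd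
    have hnH : 0 < nH := by
      rw [hnHd]
      exact_mod_cast Finset.card_pos.mpr ⟨t0, ht0⟩
    have hn0nn : 0 ≤ n0 := by rw [hn0]; positivity
    have hupper := l2sq_KW_upper hk hK hθ hΔ hH
    have hlower := l2sq_Sproj_lower hk hK hθ hH
    have h1 : Real.sqrt (l2sq Γ (KWop Γ (critX Γ) (Sproj Γ (indH H))))
        ≤ Real.tan (K / 2) * Δ * Real.sqrt n0 := by
      apply le_trans (Real.sqrt_le_sqrt hupper)
      rw [show Real.tan (K / 2) ^ 2 * Δ ^ 2 * n0 = (Real.tan (K / 2) * Δ) ^ 2 * n0 by ring]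
      rw [Real.sqrt_mul (by positivity), Real.sqrt_sq (by positivity)]
    have h2 : Real.tan (K / 2) * Δ * Real.sqrt n0
        = (Real.tan (K / 2) * Δ / Real.sin (k / 2)) * Real.sqrt (n0 / nH)
          * (Real.sin (k / 2) * Real.sqrt nH) := by
      have hs : Real.sqrt (n0 / nH) * Real.sqrt nH = Real.sqrt n0 := by
        rw [← Real.sqrt_mul (by positivity), div_mul_cancel₀ _ (ne_of_gt hnH)]
      rw [show (Real.tan (K / 2) * Δ / Real.sin (k / 2)) * Real.sqrt (n0 / nH)
          * (Real.sin (k / 2) * Real.sqrt nH)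
          = (Real.tan (K / 2) * Δ) * (Real.sqrt (n0 / nH) * Real.sqrt nH)
            * (Real.sin (k / 2) / Real.sin (k / 2)) by ring]
      rw [div_self (ne_of_gt hsk), hs, mul_one]
    have h3 : Real.sin (k / 2) * Real.sqrt nH
        ≤ Real.sqrt (l2sq Γ (Sproj Γ (indH H))) := by
      have heq : Real.sin (k / 2) * Real.sqrt nH
          = Real.sqrt (Real.sin (k / 2) ^ 2 * nH) := by
        rw [Real.sqrt_mul (by positivity), Real.sqrt_sq hsk.le]
      rw [heq]
      exact Real.sqrt_le_sqrt hlower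
    have hCnn : 0 ≤ (Real.tan (K / 2) * Δ / Real.sin (k / 2)) * Real.sqrt (n0 / nH) :=
      mul_nonneg (div_nonneg (mul_nonneg htanK.le hΔpos.le) hsk.le) (Real.sqrt_nonneg _)
    calc Real.sqrt (l2sq Γ (KWop Γ (critX Γ) (Sproj Γ (indH H))))
        ≤ Real.tan (K / 2) * Δ * Real.sqrt n0 := h1
      _ = (Real.tan (K / 2) * Δ / Real.sin (k / 2)) * Real.sqrt (n0 / nH)
          * (Real.sin (k / 2) * Real.sqrt nH) := h2
      _ ≤ (Real.tan (K / 2) * Δ / Real.sin (k / 2)) * Real.sqrt (n0 / nH)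
          * Real.sqrt (l2sq Γ (Sproj Γ (indH H))) :=
          mul_le_mul_of_nonneg_left h3 hCnn
  refine ⟨main, ?_⟩
  intro hδ
  rintro ⟨c, hc, hinv⟩
  obtain ⟨H₁, hH₁, hcard₁, _⟩ := hδ 1 one_pos
  obtain ⟨t1, ht1⟩ := Finset.card_pos.mp hcard₁
  obtain ⟨e0, he0, _⟩ := hH₁ t1 ht1
  have hθe := hθ e0 he0
  have hkK : k ≤ K := le_trans hθe.1 hθe.2
  have hKpos : 0 < K := lt_of_lt_of_le hk hkK
  have htanK : 0 < Real.tan (K / 2) :=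
    Real.tan_pos_of_pos_of_lt_pi_div_two (by linarith) (by linarith)
  have hsk : 0 < Real.sin (k / 2) :=
    Real.sin_pos_of_pos_of_lt_pi (by linarith) (by linarith [Real.pi_pos])
  have hΔpos : (0 : ℝ) < Δ := by
    have hmem : rev e0 ∈ (Γ.finOut e0.2).toFinset :=
      mem_outF.mpr ⟨Γ.symm e0 he0, rfl⟩
    have hcpos : 0 < ((Γ.finOut e0.2).toFinset.card : ℝ) := by
      exact_mod_cast Finset.card_pos.mpr ⟨rev e0, hmem⟩
    exact lt_of_lt_of_le hcpos (hΔ e0.2)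
  set C : ℝ := Real.tan (K / 2) * Δ / Real.sin (k / 2) with hC
  have hCpos : 0 < C := by
    rw [hC]
    exact div_pos (mul_pos htanK hΔpos) hsk
  have hδpos : (0 : ℝ) < (c / (C + 1)) ^ 2 := by positivity
  obtain ⟨H, hH, hcard, hratio⟩ := hδ ((c / (C + 1)) ^ 2) hδpos
  have hnH : (0 : ℝ) < (H.card : ℝ) := by exact_mod_cast hcard
  have hn0nn : (0 : ℝ) ≤ ((bdryEdges Γ H).ncard : ℝ) := by positivity
  have hlower := l2sq_Sproj_lower hk hK hθ hH
  have hφpos : 0 < Real.sqrt (l2sq Γ (Sproj Γ (indH H))) := by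
    apply Real.sqrt_pos.mpr
    have hpos : 0 < Real.sin (k / 2) ^ 2 * (H.card : ℝ) := by positivity
    linarith
  have hchain : c * Real.sqrt (l2sq Γ (Sproj Γ (indH H)))
      ≤ C * Real.sqrt (((bdryEdges Γ H).ncard : ℝ) / (H.card : ℝ))
        * Real.sqrt (l2sq Γ (Sproj Γ (indH H))) :=
    le_trans (hinv (Sproj Γ (indH H))) (main H hH (Finset.card_pos.mp hcard))
  have hle : c ≤ C * Real.sqrt (((bdryEdges Γ H).ncard : ℝ) / (H.card : ℝ)) :=
    (mul_le_mul_iff_of_pos_right hφpos).mp hchain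
  have hratio' : Real.sqrt (((bdryEdges Γ H).ncard : ℝ) / (H.card : ℝ)) < c / (C + 1) := by
    have h0 : ((bdryEdges Γ H).ncard : ℝ) / (H.card : ℝ) < (c / (C + 1)) ^ 2 := by
      rw [div_lt_iff₀ hnH]
      exact hratio
    calc Real.sqrt (((bdryEdges Γ H).ncard : ℝ) / (H.card : ℝ))
        < Real.sqrt ((c / (C + 1)) ^ 2) := Real.sqrt_lt_sqrt (div_nonneg hn0nn hnH.le) h0
      _ = c / (C + 1) := Real.sqrt_sq (by positivity)
  have hfinal : c < c := by
    calc c ≤ C * Real.sqrt (((bdryEdges Γ H).ncard : ℝ) / (H.card : ℝ)) := hle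
      _ < C * (c / (C + 1)) := mul_lt_mul_of_pos_left hratio' hCpos
      _ < c := by
          rw [mul_div_assoc']
          rw [div_lt_iff₀ (by positivity)]
          nlinarith
  exact lt_irrefl c hfinal
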